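/- arXiv:1301.4889 — 7 statements merged into one kernel-verified Lean document; each statement's English description precedes it below -/
import Mathlib

section
/- Let φ : [0,1] → [0,1] be nondecreasing and continuous with φ(0) > 0 and φ(1−ε) = 1 for some ε ∈ (0,1), and let N ≥ 2 satisfy φ^N ≡ 1. Then for every n ≥ N+1 the iterated integral A_n = ∫₀¹ ∫_{φ(t₁)}^1 ⋯ ∫_{φ(t_{n−1})}^1 dt_n ⋯ dt₁ equals 0. -/
open Set intervalIntegral

/-- If `φ^N ≡ 1` on `[0,1]` then the iterated integral
`A_n = ∫₀¹ ∫_{φ(t₁)}^1 ⋯ ∫_{φ(t_{n−1})}^1 dt_n ⋯ dt₁` vanishes for `n ≥ N + 1`.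
Here `G k t` encodes the inner `k`-fold iterated integral starting from `t`. -/
theorem stmt_2 (φ : ℝ → ℝ)
    (hcont : ContinuousOn φ (Icc 0 1))
    (hmaps : MapsTo φ (Icc 0 1) (Icc 0 1))
    (hmono : MonotoneOn φ (Icc 0 1))
    (hgt : ∀ x ∈ Ioo (0:ℝ) 1, x < φ x)
    (h0 : 0 < φ 0) (ε : ℝ) (hε : ε ∈ Ioo (0:ℝ) 1) (h1 : φ (1 - ε) = 1)
    (N : ℕ) (hN : 2 ≤ N) (hiter : ∀ x ∈ Icc (0:ℝ) 1, φ^[N] x = 1)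
    (G : ℕ → ℝ → ℝ)
    (hG0 : ∀ t, G 0 t = 1)
    (hGsucc : ∀ k t, G (k + 1) t = ∫ s in (φ t)..1, G k s) :
    ∀ n, N + 1 ≤ n → (∫ t in (0:ℝ)..1, G (n - 1) t) = 0 := by
  have hmapsI : ∀ k, MapsTo (φ^[k]) (Icc 0 1) (Icc 0 1) := by
    intro k
    induction k with
    | zero => exact fun x hx => by simpa using hx
    | succ k ih => rw [Function.iterate_succ']; exact Set.MapsTo.comp hmaps ih
  have hmonoI : ∀ k, MonotoneOn (φ^[k]) (Icc 0 1) := by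
    intro k
    induction k with
    | zero => simpa using monotoneOn_id
    | succ k ih =>
      rw [Function.iterate_succ']
      exact fun a ha b hb hab => hmono (hmapsI k ha) (hmapsI k hb) (ih ha hb hab)
  have key : ∀ k, ∀ t ∈ Icc (0:ℝ) 1, φ^[k+1] t = 1 → G (k+1) t = 0 := by
    intro k
    induction k with
    | zero =>
      intro t ht h
      replace h : φ t = 1 := by simpa using h
      rw [hGsucc, h, intervalIntegral.integral_same]
    | succ k ih =>
      intro t ht h
      have hφt : φ t ∈ Icc (0:ℝ) 1 := hmaps ht
      rw [hGsucc]
      rw [show (∫ s in (φ t)..1, G (k+1) s) = ∫ s in (φ t)..1, (0:ℝ) from ?_]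
      · simp
      apply intervalIntegral.integral_congr
      intro s hs
      rw [uIcc_of_le hφt.2] at hs
      have hs01 : s ∈ Icc (0:ℝ) 1 := ⟨le_trans hφt.1 hs.1, hs.2⟩
      apply ih s hs01
      have h1' : φ^[k+1] (φ t) = 1 :=
        (Function.iterate_succ_apply φ (k+1) t).symm.trans h
      have hle : (1:ℝ) ≤ φ^[k+1] s := by
        rw [← h1']
        exact hmonoI (k+1) hφt hs01 hs.1
      exact le_antisymm ((hmapsI (k+1) hs01).2) hle
  have zero_all : ∀ m, ∀ t ∈ Icc (0:ℝ) 1, G (N + m) t = 0 := by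
    intro m
    induction m with
    | zero =>
      intro t ht
      obtain ⟨k, rfl⟩ : ∃ k, N = k + 1 := ⟨N - 1, by omega⟩
      exact key k t ht (hiter t ht)
    | succ m ih =>
      intro t ht
      have hφt : φ t ∈ Icc (0:ℝ) 1 := hmaps ht
      rw [show N + (m+1) = (N + m) + 1 by ring, hGsucc]
      rw [show (∫ s in (φ t)..1, G (N+m) s) = ∫ s in (φ t)..1, (0:ℝ) from ?_]
      · simp
      apply intervalIntegral.integral_congr
      intro s hs
      rw [uIcc_of_le hφt.2] at hs
      exact ih s ⟨le_trans hφt.1 hs.1, hs.2⟩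
  intro n hn
  have hz : ∀ t ∈ Icc (0:ℝ) 1, G (n-1) t = 0 := by
    intro t ht
    have := zero_all (n - 1 - N) t ht
    rwa [show N + (n - 1 - N) = n - 1 by omega] at this
  rw [show (∫ t in (0:ℝ)..1, G (n-1) t) = ∫ t in (0:ℝ)..1, (0:ℝ) from ?_]
  · simp
  apply intervalIntegral.integral_congr
  intro t ht
  rw [uIcc_of_le (by norm_num : (0:ℝ) ≤ 1)] at ht
  exact hz t ht
end

section
/- Let β > 1 and define ψ₂(x) = ε + (1−2ε)^{1−β}(x−ε)^β for x ∈ [ε, 1−ε], where 0 < ε ≤ 1/4. Define iterated integrals b̃₁(x) = (1−2ε)^{1−β}(x−ε)^β and b̃_{l+1}(x) = ∫_ε^{ψ₂(x)} b̃_l(t) dt. Then for all l ≥ 2, b̃_l(x) = (1−2ε)^{l−β−β²−⋯−β^l} (x−ε)^{β+β²+⋯+β^l} / ((1+β)(1+β+β²)⋯(1+β+⋯+β^{l−1})). -/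
open Set intervalIntegral Finset

noncomputable def Sfun (β : ℝ) (l : ℕ) : ℝ := ∑ j ∈ Finset.Icc 1 l, β ^ j

noncomputable def Pfun (β : ℝ) (l : ℕ) : ℝ :=
  ∏ k ∈ Finset.range (l - 1), ∑ j ∈ Finset.range (k + 2), β ^ j

theorem stmt_5 (β ε : ℝ) (hβ : 1 < β) (hε : 0 < ε) (hε' : ε ≤ 1 / 4)
    (bt : ℕ → ℝ → ℝ)
    (hbt1 : ∀ x, bt 1 x = (1 - 2 * ε) ^ ((1 : ℝ) - β) * (x - ε) ^ β)
    (hbtsucc : ∀ l x, bt (l + 1) x =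
      ∫ t in ε..(ε + (1 - 2 * ε) ^ ((1 : ℝ) - β) * (x - ε) ^ β), bt l t) :
    ∀ l, 2 ≤ l → ∀ x ∈ Icc ε (1 - ε),
      bt l x =
        (1 - 2 * ε) ^ ((l : ℝ) - ∑ j ∈ Finset.Icc 1 l, β ^ j) *
            (x - ε) ^ (∑ j ∈ Finset.Icc 1 l, β ^ j) /
          ∏ k ∈ Finset.range (l - 1), ∑ j ∈ Finset.range (k + 2), β ^ j := by
  have hβ0 : (0:ℝ) < β := by linarith
  have h2ε : (0:ℝ) < 1 - 2 * ε := by linarith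
  have hRS : ∀ l : ℕ, (∑ j ∈ Finset.range (l + 1), β ^ j) = Sfun β l + 1 := by
    intro l
    induction l with
    | zero => simp [Sfun]
    | succ n ih =>
        simp only [Sfun] at ih ⊢
        rw [Finset.sum_range_succ, ih, Finset.sum_Icc_succ_top (by omega : 1 ≤ n + 1)]
        ring
  have hSrec : ∀ l : ℕ, Sfun β (l + 1) = β * (Sfun β l + 1) := by
    intro l
    rw [← hRS l, Sfun, ← Finset.Ico_add_one_right_eq_Icc, Finset.sum_Ico_eq_sum_range,
      show l + 1 + 1 - 1 = l + 1 from rfl, Finset.mul_sum]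
    exact Finset.sum_congr rfl (fun j _ => by ring)
  have hPrec : ∀ l : ℕ, 1 ≤ l → Pfun β (l + 1) = Pfun β l * (Sfun β l + 1) := by
    intro l hl
    obtain ⟨m, rfl⟩ := Nat.exists_eq_add_of_le hl
    rw [Pfun, Pfun, show 1 + m + 1 - 1 = m + 1 by omega, show 1 + m - 1 = m by omega,
      Finset.prod_range_succ, show m + 2 = (1 + m) + 1 by omega, hRS]
  have hSpos : ∀ l : ℕ, 1 ≤ l → 0 < Sfun β l := by
    intro l hl
    apply Finset.sum_pos (fun j _ => pow_pos hβ0 j)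
    exact ⟨1, Finset.mem_Icc.mpr ⟨le_refl 1, hl⟩⟩
  have hPpos : ∀ l : ℕ, 0 < Pfun β l := by
    intro l
    apply Finset.prod_pos
    intro k _
    apply Finset.sum_pos (fun j _ => pow_pos hβ0 j) ⟨0, by simp⟩
  have hint : ∀ p : ℝ, 0 < p → ∀ y : ℝ, ε ≤ y →
      (∫ t in ε..y, (t - ε) ^ p) = (y - ε) ^ (p + 1) / (p + 1) := by
    intro p hp y hy
    have h1 := intervalIntegral.integral_comp_sub_right (a := ε) (b := y) (fun t : ℝ => t ^ p) ε
    rw [h1, sub_self, integral_rpow (Or.inl (by linarith)),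
      Real.zero_rpow (by positivity), sub_zero]
  have key : ∀ l : ℕ, 1 ≤ l → ∀ x : ℝ, ε ≤ x →
      bt l x = (1 - 2 * ε) ^ ((l : ℝ) - Sfun β l) * (x - ε) ^ (Sfun β l) / Pfun β l := by
    intro l hl
    induction l, hl using Nat.le_induction with
    | base =>
        intro x hx
        rw [hbt1]
        simp [Sfun, Pfun]
    | succ l hl ih =>
        intro x hx
        have hc : (0:ℝ) ≤ (1 - 2 * ε) ^ ((1:ℝ) - β) := Real.rpow_nonneg h2ε.le _
        have hxε : (0:ℝ) ≤ x - ε := by linarith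
        set c := (1 - 2 * ε) ^ ((1:ℝ) - β) with hcdef
        set y := ε + c * (x - ε) ^ β with hydef
        have hyε : ε ≤ y := le_add_of_nonneg_right (mul_nonneg hc (Real.rpow_nonneg hxε _))
        rw [hbtsucc l x]
        rw [intervalIntegral.integral_congr
          (g := fun t => (1 - 2 * ε) ^ ((l : ℝ) - Sfun β l) / Pfun β l * (t - ε) ^ (Sfun β l))
          (by
            intro t ht
            rw [Set.uIcc_of_le hyε] at ht
            simp only
            rw [ih t ht.1]
            ring)]
        rw [intervalIntegral.integral_const_mul, hint _ (hSpos l hl) y hyε,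
          show y - ε = c * (x - ε) ^ β by rw [hydef]; ring,
          Real.mul_rpow hc (Real.rpow_nonneg hxε β), hcdef,
          ← Real.rpow_mul h2ε.le, ← Real.rpow_mul hxε]
        rw [hPrec l hl, hSrec l]
        have eB : (1 - 2*ε) ^ ((↑(l+1) : ℝ) - β * (Sfun β l + 1)) =
            (1 - 2*ε) ^ ((l : ℝ) - Sfun β l) * (1 - 2*ε) ^ ((1 - β) * (Sfun β l + 1)) := by
          rw [← Real.rpow_add h2ε]
          congr 1
          push_cast
          ring
        rw [eB]
        have hP : Pfun β l ≠ 0 := (hPpos l).ne'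
        have hS1 : Sfun β l + 1 ≠ 0 := by have := hSpos l hl; positivity
        field_simp
  intro l hl x hx
  have := key l (by omega) x hx.1
  rw [this, Sfun, Pfun]
end

section
/- Let β > 1 and let a₀ = 1, a₁ = 1/2, and a_l = 2^{−l}/((β+1)(β²+β+1)⋯(β^{l−1}+⋯+β+1)) for l ≥ 2, and set d_n = Σ_{l=0}^n a_l a_{n−l}. Then d_n < β^{(−n²/2+n)/4} / n! for all n ≥ 1. -/
open Finset

lemma aux_amgm (β : ℝ) (hβ : 1 < β) (m : ℕ) (hm : 1 ≤ m) :
    ((m : ℝ) + 1) * β ^ ((m : ℝ) / 2) < ∑ j ∈ Finset.range (m + 1), β ^ j := by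
  have hβ0 : (0 : ℝ) < β := by linarith
  have key : ∀ j ∈ Finset.range (m + 1),
      2 * β ^ ((m : ℝ) / 2) ≤ β ^ j + β ^ (m - j) := by
    intro j hj
    have hjm : j ≤ m := by simpa using Nat.lt_succ_iff.mp (Finset.mem_range.mp hj)
    set x := β ^ ((j : ℝ) / 2) with hx
    set y := β ^ (((m - j : ℕ) : ℝ) / 2) with hy
    have hxx : x * x = β ^ j := by
      rw [hx, ← Real.rpow_add hβ0, ← Real.rpow_natCast β j]; norm_num
    have hyy : y * y = β ^ (m - j) := by
      rw [hy, ← Real.rpow_add hβ0, ← Real.rpow_natCast β (m - j)]; norm_num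
    have hxy : x * y = β ^ ((m : ℝ) / 2) := by
      rw [hx, hy, ← Real.rpow_add hβ0, Nat.cast_sub hjm]; ring_nf
    nlinarith [sq_nonneg (x - y)]
  have key0 : 2 * β ^ ((m : ℝ) / 2) < β ^ (0:ℕ) + β ^ (m - 0) := by
    have hyy : β ^ ((m:ℝ)/2) * β ^ ((m:ℝ)/2) = β ^ m := by
      rw [← Real.rpow_add hβ0, ← Real.rpow_natCast β m]; norm_num
    have hy1 : 1 < β ^ ((m:ℝ)/2) := by
      refine (Real.one_lt_rpow_iff_of_pos hβ0).mpr (Or.inl ⟨hβ, by positivity⟩)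
    simp only [pow_zero, Nat.sub_zero]
    nlinarith
  have h1 : ∑ j ∈ Finset.range (m+1), (2 * β ^ ((m:ℝ)/2)) <
      ∑ j ∈ Finset.range (m+1), (β ^ j + β ^ (m - j)) := by
    apply Finset.sum_lt_sum key
    exact ⟨0, Finset.mem_range.mpr (Nat.succ_pos m), key0⟩
  rw [Finset.sum_const, Finset.sum_add_distrib] at h1
  have h2 : ∑ j ∈ Finset.range (m+1), β ^ (m - j) = ∑ j ∈ Finset.range (m+1), β ^ j := by
    have := Finset.sum_range_reflect (fun j => β ^ j) (m+1)
    simpa using this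
  rw [h2] at h1
  simp only [Finset.card_range, nsmul_eq_mul] at h1
  push_cast at h1 ⊢
  linarith


lemma aux_prod_fact (l : ℕ) : ∏ k ∈ Finset.range l, ((k : ℝ) + 2) = ((l+1).factorial : ℝ) := by
  induction l with
  | zero => simp
  | succ n ih =>
      rw [Finset.prod_range_succ, ih]
      have : (n+1+1).factorial = (n+2) * (n+1).factorial := rfl
      rw [this]; push_cast; ring

lemma aux_gauss (m : ℕ) : ∑ k ∈ Finset.range m, ((k : ℝ) + 1) = m * (m + 1) / 2 := by
  induction m with
  | zero => simp
  | succ n ih => rw [Finset.sum_range_succ, ih]; push_cast; ring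

lemma aux_prod_lt (β : ℝ) (hβ : 1 < β) (l : ℕ) (hl : 2 ≤ l) :
    (l.factorial : ℝ) * β ^ ((l : ℝ) * ((l : ℝ) - 1) / 4) <
      ∏ k ∈ Finset.range (l - 1), ∑ j ∈ Finset.range (k + 2), β ^ j := by
  have hβ0 : (0 : ℝ) < β := by linarith
  have hlt : ∀ k ∈ Finset.range (l - 1),
      ((k : ℝ) + 2) * β ^ (((k : ℝ) + 1) / 2) < ∑ j ∈ Finset.range (k + 2), β ^ j := by
    intro k _
    have h := aux_amgm β hβ (k + 1) (Nat.le_add_left 1 k)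
    push_cast at h
    have e : (↑k + 1 + 1 : ℝ) = ↑k + 2 := by ring
    rw [e] at h
    convert h using 3
  have hpos : ∀ k ∈ Finset.range (l - 1), (0:ℝ) < ((k : ℝ) + 2) * β ^ (((k : ℝ) + 1) / 2) := by
    intro k _; positivity
  have hne : (Finset.range (l - 1)).Nonempty := by
    refine ⟨0, Finset.mem_range.mpr ?_⟩; omega
  have h := Finset.prod_lt_prod_of_nonempty hpos hlt hne
  calc (l.factorial : ℝ) * β ^ ((l : ℝ) * ((l : ℝ) - 1) / 4)
      = ∏ k ∈ Finset.range (l - 1), ((k : ℝ) + 2) * β ^ (((k : ℝ) + 1) / 2) := by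
        rw [Finset.prod_mul_distrib, ← Real.rpow_sum_of_pos hβ0]
        have e1 : ∏ k ∈ Finset.range (l - 1), ((k : ℝ) + 2) = (l.factorial : ℝ) := by
          rw [aux_prod_fact]; congr 2; omega
        have e2 : ∑ k ∈ Finset.range (l - 1), (((k : ℝ) + 1) / 2)
            = (l : ℝ) * ((l : ℝ) - 1) / 4 := by
          rw [← Finset.sum_div, aux_gauss]
          have : ((l - 1 : ℕ) : ℝ) = (l : ℝ) - 1 := by
            rw [Nat.cast_sub (by omega)]; norm_num
          rw [this]; ring
        rw [e1, e2]
    _ < _ := h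

theorem stmt_9 (β : ℝ) (hβ : 1 < β)
    (a : ℕ → ℝ)
    (ha0 : a 0 = 1) (ha1 : a 1 = 1 / 2)
    (ha : ∀ l, 2 ≤ l → a l =
      2 ^ (-(l : ℤ)) / ∏ k ∈ Finset.range (l - 1), ∑ j ∈ Finset.range (k + 2), β ^ j)
    (d : ℕ → ℝ)
    (hd : ∀ n, d n = ∑ l ∈ Finset.range (n + 1), a l * a (n - l)) :
    ∀ n, 1 ≤ n →
      d n < β ^ ((-(n : ℝ) ^ 2 / 2 + (n : ℝ)) / 4) / (n.factorial : ℝ) := by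
  have hβ0 : (0 : ℝ) < β := by linarith
  set b : ℕ → ℝ := fun l => β ^ (-((l : ℝ) * ((l : ℝ) - 1)) / 4) / (2 ^ l * (l.factorial : ℝ))
    with hbdef
  have hb_pos : ∀ l, 0 < b l := by
    intro l
    have h1 : (0:ℝ) < (l.factorial : ℝ) := by exact_mod_cast l.factorial_pos
    simp only [hbdef]
    positivity
  have hb0 : b 0 = 1 := by simp [hbdef]
  have hb1 : b 1 = 1 / 2 := by norm_num [hbdef]
  have hP_pos : ∀ l : ℕ, 0 < ∏ k ∈ Finset.range (l - 1), ∑ j ∈ Finset.range (k + 2), β ^ j := by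
    intro l
    apply Finset.prod_pos
    intro k _
    apply Finset.sum_pos
    · intro j _; positivity
    · exact ⟨0, Finset.mem_range.mpr (by omega)⟩
  have ha_pos : ∀ l, 0 < a l := by
    intro l
    rcases (by omega : l = 0 ∨ l = 1 ∨ 2 ≤ l) with rfl | rfl | hl
    · rw [ha0]; norm_num
    · rw [ha1]; norm_num
    · rw [ha l hl]
      exact div_pos (by positivity) (hP_pos l)
  have hab_lt : ∀ l, 2 ≤ l → a l < b l := by
    intro l hl
    have h1 := aux_prod_lt β hβ l hl
    have hF : (0:ℝ) < (l.factorial : ℝ) := by exact_mod_cast l.factorial_pos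
    have h2 : (0:ℝ) < (l.factorial : ℝ) * β ^ ((l : ℝ) * ((l : ℝ) - 1) / 4) := by positivity
    have hbl : b l = 2 ^ (-(l : ℤ)) / ((l.factorial : ℝ) * β ^ ((l : ℝ) * ((l : ℝ) - 1) / 4)) := by
      simp only [hbdef]
      rw [zpow_neg, zpow_natCast, neg_div, Real.rpow_neg hβ0.le]
      have hr : (0:ℝ) < β ^ ((l : ℝ) * ((l : ℝ) - 1) / 4) := by positivity
      field_simp
    rw [ha l hl, hbl]
    apply div_lt_div_of_pos_left (by positivity) h2 h1
  have hab_le : ∀ l, a l ≤ b l := by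
    intro l
    rcases (by omega : l = 0 ∨ l = 1 ∨ 2 ≤ l) with rfl | rfl | hl
    · rw [ha0, hb0]
    · rw [ha1, hb1]
    · exact (hab_lt l hl).le
  intro n hn
  rcases (by omega : n = 1 ∨ 2 ≤ n) with rfl | hn2
  · rw [hd]
    have : ∑ l ∈ Finset.range 2, a l * a (1 - l) = 1 := by
      rw [Finset.sum_range_succ, Finset.sum_range_one]
      norm_num [ha0, ha1]
    rw [this]
    have hE : ((-((1:ℕ):ℝ) ^ 2 / 2 + ((1:ℕ):ℝ)) / 4) = (1/8 : ℝ) := by norm_num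
    rw [hE]
    have h18 : (1:ℝ) < β ^ (1/8 : ℝ) :=
      (Real.one_lt_rpow_iff_of_pos hβ0).mpr (Or.inl ⟨hβ, by norm_num⟩)
    simpa [Nat.factorial] using h18
  · set E : ℝ := (-(n : ℝ) ^ 2 / 2 + (n : ℝ)) / 4 with hE
    set t : ℕ → ℝ := fun l => β ^ E * (n.choose l : ℝ) / ((n.factorial : ℝ) * 2 ^ n) with htdef
    have hF : (0:ℝ) < (n.factorial : ℝ) := by exact_mod_cast n.factorial_pos
    -- each b l * b (n-l) ≤ t l
    have hbt : ∀ l ∈ Finset.range (n + 1), b l * b (n - l) ≤ t l := by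
      intro l hl
      have hln : l ≤ n := by
        have := Finset.mem_range.mp hl; omega
      have hcast : ((n - l : ℕ) : ℝ) = (n : ℝ) - (l : ℝ) := by
        rw [Nat.cast_sub hln]
      have hCf : ((n.choose l : ℝ)) * (l.factorial : ℝ) * ((n - l).factorial : ℝ)
          = (n.factorial : ℝ) := by
        exact_mod_cast congrArg (Nat.cast : ℕ → ℝ)
          (Nat.choose_mul_factorial_mul_factorial hln)
      have hC_pos : (0:ℝ) < (n.choose l : ℝ) := by
        exact_mod_cast Nat.choose_pos hln
      have hFl : (0:ℝ) < (l.factorial : ℝ) := by exact_mod_cast l.factorial_pos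
      have hFnl : (0:ℝ) < ((n - l).factorial : ℝ) := by exact_mod_cast (n - l).factorial_pos
      have hpow : (2:ℝ) ^ l * 2 ^ (n - l) = 2 ^ n := by
        rw [← pow_add]; congr 1; omega
      set X : ℝ := -((l : ℝ) * ((l : ℝ) - 1)) / 4
          + -((((n : ℝ) - l) * (((n : ℝ) - l) - 1))) / 4 with hX
      -- rewrite b l * b (n-l)
      have hbb : b l * b (n - l) =
          β ^ X * (n.choose l : ℝ) / ((n.factorial : ℝ) * 2 ^ n) := by
        simp only [hbdef]
        rw [div_mul_div_comm, ← Real.rpow_add hβ0, hcast, ← hX]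
        rw [div_eq_div_iff (by positivity) (by positivity)]
        linear_combination (-(β ^ X * 2 ^ n)) * hCf
          - (β ^ X * (n.choose l : ℝ) * (l.factorial : ℝ) * ((n - l).factorial : ℝ)) * hpow
      rw [hbb, htdef]
      have hexp : X ≤ E := by
        rw [hX, hE]
        nlinarith [sq_nonneg (2 * (l : ℝ) - (n : ℝ))]
      have hrle : β ^ X ≤ β ^ E :=
        Real.rpow_le_rpow_left_iff hβ |>.mpr hexp
      have h2n : (0:ℝ) < (2:ℝ) ^ n := by positivity
      apply div_le_div_of_nonneg_right ?_ (by positivity)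
      exact mul_le_mul_of_nonneg_right hrle hC_pos.le
    -- strict sum comparison
    have hat : ∀ l ∈ Finset.range (n + 1), a l * a (n - l) ≤ t l := by
      intro l hl
      refine le_trans ?_ (hbt l hl)
      exact mul_le_mul (hab_le l) (hab_le (n - l)) (ha_pos (n - l)).le (hb_pos l).le
    have hstrict : a 0 * a (n - 0) < t 0 := by
      refine lt_of_lt_of_le ?_ (hbt 0 (Finset.mem_range.mpr (by omega)))
      rw [ha0, hb0, one_mul, one_mul, Nat.sub_zero]
      exact hab_lt n hn2
    have hsum : d n < ∑ l ∈ Finset.range (n + 1), t l := by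
      rw [hd]
      exact Finset.sum_lt_sum hat ⟨0, Finset.mem_range.mpr (by omega), hstrict⟩
    refine hsum.trans_le (le_of_eq ?_)
    simp only [htdef]
    rw [← Finset.sum_div, ← Finset.mul_sum]
    have hch : ∑ l ∈ Finset.range (n + 1), ((n.choose l : ℝ)) = 2 ^ n := by
      have := Nat.sum_range_choose n
      exact_mod_cast congrArg (Nat.cast : ℕ → ℝ) this
    rw [hch, hE]
    field_simp
end

section
/- For each α ∈ (0,1) and each n ≥ 1, the iterated integral ∫₀¹ ∫_{t₁^α}^1 ⋯ ∫_{t_{n−1}^α}^1 dt_n ⋯ dt₁ equals α^{n(n−1)/2}(1−α)^n / ((1−α)(1−α²)⋯(1−α^n)). -/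
open Set intervalIntegral Finset


noncomputable def Paux (α : ℝ) (k : ℕ) : ℝ := ∏ i ∈ Finset.range k, (1 - α ^ (i+1))
noncomputable def eaux (α : ℝ) (j : ℕ) : ℝ := ∑ i ∈ Finset.range j, α ^ (i+1)
noncomputable def caux (α : ℝ) (n j : ℕ) : ℝ :=
  (-1)^j * α^((n-j).choose 2) * (1-α)^n / (Paux α j * Paux α (n-j))

lemma apow_lt_one {α : ℝ} (h0 : 0 < α) (h1 : α < 1) (k : ℕ) : α ^ (k+1) < 1 :=
  pow_lt_one₀ h0.le h1 (Nat.succ_ne_zero k)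

lemma Paux_pos {α : ℝ} (h0 : 0 < α) (h1 : α < 1) (k : ℕ) : 0 < Paux α k := by
  apply Finset.prod_pos
  intro i _
  have := apow_lt_one h0 h1 i
  linarith

lemma Paux_zero (α : ℝ) : Paux α 0 = 1 := by simp [Paux]

lemma Paux_succ (α : ℝ) (k : ℕ) : Paux α (k+1) = Paux α k * (1 - α^(k+1)) :=
  Finset.prod_range_succ _ _

lemma choose_two_succ (k : ℕ) : (k+1).choose 2 = k.choose 2 + k := by
  rw [Nat.choose_succ_succ]
  simp [Nat.choose_one_right, Nat.add_comm]

variable {α : ℝ}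

lemma step_mid (h0 : 0 < α) (h1 : α < 1) (j k : ℕ) :
    (1 - α^(j+k+2)) * caux α (j+k+2) (j+1)
      = -(1-α) * caux α (j+1+k) j + (1-α)*α^(j+1+k)*caux α (j+1+k) (j+1) := by
  have e1 : (j+k+2) - (j+1) = k+1 := by omega
  have e2 : (j+1+k) - j = k+1 := by omega
  have e3 : (j+1+k) - (j+1) = k := by omega
  simp only [caux, e1, e2, e3, Paux_succ, choose_two_succ]
  have hPj := (Paux_pos h0 h1 j).ne'
  have hPk := (Paux_pos h0 h1 k).ne'
  have hj1 : (1 - α^(j+1)) ≠ 0 := by have := apow_lt_one h0 h1 j; linarith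
  have hk1 : (1 - α^(k+1)) ≠ 0 := by have := apow_lt_one h0 h1 k; linarith
  field_simp
  ring

lemma step_edge (h0 : 0 < α) (h1 : α < 1) (M : ℕ) :
    (1 - α^(M+1)) * caux α (M+1) (M+1) = -(1-α) * caux α M M := by
  simp only [caux, Nat.sub_self, Nat.choose_zero_succ, Paux_succ, Paux_zero]
  have hPM := (Paux_pos h0 h1 M).ne'
  have hM1 : (1 - α^(M+1)) ≠ 0 := by have := apow_lt_one h0 h1 M; linarith
  field_simp
  ring

lemma step_zero (h0 : 0 < α) (h1 : α < 1) (M : ℕ) :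
    (1 - α^(M+1)) * caux α (M+1) 0 = (1-α) * α^M * caux α M 0 := by
  simp only [caux, Nat.sub_zero, Paux_succ, choose_two_succ, Paux_zero]
  have hPM := (Paux_pos h0 h1 M).ne'
  have hM1 : (1 - α^(M+1)) ≠ 0 := by have := apow_lt_one h0 h1 M; linarith
  field_simp
  ring

lemma key_step (h0 : 0 < α) (h1 : α < 1) (M : ℕ) :
    (1 - α^(M+1)) * (∑ j ∈ Finset.range (M+2), caux α (M+1) j)
      = (1-α) * (α^M - 1) * ∑ j ∈ Finset.range (M+1), caux α M j := by
  set h : ℕ → ℝ := fun j => if j ≤ M then (1-α)*α^M*caux α M j else 0 with hh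
  have hpt : ∀ j ∈ Finset.range (M+1),
      (1 - α^(M+1)) * caux α (M+1) (j+1) = -(1-α) * caux α M j + h (j+1) := by
    intro j hj
    rw [Finset.mem_range] at hj
    rcases lt_or_eq_of_le (Nat.lt_succ_iff.mp hj) with hlt | rfl
    · obtain ⟨k, hk⟩ : ∃ k, M = j + 1 + k := ⟨M - (j+1), by omega⟩
      have hle : j + 1 ≤ M := by omega
      simp only [hh, if_pos hle]
      subst hk
      have e : j + 1 + k + 1 = j + k + 2 := by omega
      rw [e]
      exact step_mid h0 h1 j k
    · have : ¬ (j + 1 ≤ j) := by omega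
      simp only [hh, if_neg this, add_zero]
      exact step_edge h0 h1 j
  calc (1 - α^(M+1)) * (∑ j ∈ Finset.range (M+2), caux α (M+1) j)
      = ∑ j ∈ Finset.range (M+2), (1 - α^(M+1)) * caux α (M+1) j := by
        rw [Finset.mul_sum]
    _ = (∑ j ∈ Finset.range (M+1), (1 - α^(M+1)) * caux α (M+1) (j+1))
          + (1 - α^(M+1)) * caux α (M+1) 0 := Finset.sum_range_succ' _ _
    _ = (∑ j ∈ Finset.range (M+1), (-(1-α) * caux α M j + h (j+1))) + h 0 := by
        rw [Finset.sum_congr rfl hpt]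
        congr 1
        simp only [hh, if_pos (Nat.zero_le M)]
        exact step_zero h0 h1 M
    _ = (-(1-α)) * (∑ j ∈ Finset.range (M+1), caux α M j)
          + ((∑ j ∈ Finset.range (M+1), h (j+1)) + h 0) := by
        rw [Finset.sum_add_distrib, ← Finset.mul_sum]
        ring
    _ = (-(1-α)) * (∑ j ∈ Finset.range (M+1), caux α M j)
          + (∑ j ∈ Finset.range (M+2), h j) := by
        rw [Finset.sum_range_succ' h]
    _ = (-(1-α)) * (∑ j ∈ Finset.range (M+1), caux α M j)
          + ((1-α)*α^M) * (∑ j ∈ Finset.range (M+1), caux α M j) := by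
        congr 1
        rw [Finset.sum_range_succ]
        have : h (M+1) = 0 := by simp [hh]
        rw [this, add_zero, Finset.mul_sum]
        refine Finset.sum_congr rfl fun j hj => ?_
        rw [Finset.mem_range] at hj
        simp [hh, Nat.lt_succ_iff.mp hj]
    _ = (1-α) * (α^M - 1) * ∑ j ∈ Finset.range (M+1), caux α M j := by ring

lemma key (h0 : 0 < α) (h1 : α < 1) (m : ℕ) (hm : 1 ≤ m) : ∑ j ∈ Finset.range (m+1), caux α m j = 0 := by
  induction m with
  | zero => omega
  | succ M ih =>
      rcases Nat.eq_zero_or_pos M with rfl | hM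
      · have hne : (1:ℝ) - α ≠ 0 := by linarith
        simp [Finset.sum_range_succ, caux, Paux]
        field_simp
        ring
      · have hs := key_step h0 h1 M
        rw [ih hM, mul_zero] at hs
        have hM1 : (1 - α^(M+1)) ≠ 0 := by have := apow_lt_one h0 h1 M; linarith
        exact (mul_eq_zero.mp hs).resolve_left hM1

lemma eaux_zero (α : ℝ) : eaux α 0 = 0 := by simp [eaux]

lemma eaux_succ (α : ℝ) (j : ℕ) : eaux α (j+1) = α * eaux α j + α := by
  rw [eaux, Finset.sum_range_succ', eaux, Finset.mul_sum]
  congr 1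
  · exact Finset.sum_congr rfl fun i _ => by ring
  · ring

lemma eaux_nonneg {α : ℝ} (h0 : 0 < α) (j : ℕ) : 0 ≤ eaux α j :=
  Finset.sum_nonneg fun i _ => by positivity

lemma eaux_pos {α : ℝ} (h0 : 0 < α) (j : ℕ) (hj : 1 ≤ j) : 0 < eaux α j := by
  obtain ⟨k, rfl⟩ := Nat.exists_eq_add_of_le hj
  rw [add_comm, eaux_succ]
  have := eaux_nonneg h0 (α := α) k
  nlinarith

lemma one_sub_mul_eaux (α : ℝ) (j : ℕ) : (1 - α) * (eaux α j + 1) = 1 - α^(j+1) := by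
  induction j with
  | zero => simp [eaux_zero]
  | succ j ih =>
      rw [eaux_succ]
      have h : (1-α) * (α * eaux α j + α + 1) = α * ((1-α)*(eaux α j + 1)) + (1-α) := by ring
      rw [h, ih]; ring

lemma eaux_succ' (α : ℝ) (j : ℕ) : eaux α (j+1) = α * (eaux α j + 1) := by
  rw [eaux_succ]; ring

lemma eaux_add_one_pos {α : ℝ} (h0 : 0 < α) (j : ℕ) : 0 < eaux α j + 1 := by
  have := eaux_nonneg h0 (α := α) j; linarith

lemma crec {α : ℝ} (h0 : 0 < α) (h1 : α < 1) (n j : ℕ) :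
    caux α (n+1) (j+1) = -(caux α n j / (eaux α j + 1)) := by
  simp only [caux, Nat.succ_sub_succ, Paux_succ]
  have hPj := (Paux_pos h0 h1 j).ne'
  have hPnj := (Paux_pos h0 h1 (n-j)).ne'
  have hj1 : (1 - α^(j+1)) ≠ 0 := by have := apow_lt_one h0 h1 j; linarith
  have he := (eaux_add_one_pos h0 (α := α) j).ne'
  have hme := one_sub_mul_eaux α j
  field_simp
  rw [← hme]
  ring

lemma prodIcc (α : ℝ) (n : ℕ) : ∏ k ∈ Finset.Icc 1 n, (1 - α^k) = Paux α n := by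
  rw [← Finset.Ico_add_one_right_eq_Icc, Finset.prod_Ico_eq_prod_range]
  simp [Paux, add_comm]

lemma Gform {α : ℝ} (h0 : 0 < α) (h1 : α < 1) (G : ℕ → ℝ → ℝ)
    (hG0 : ∀ t, G 0 t = 1)
    (hGsucc : ∀ k t, G (k + 1) t = ∫ s in (t ^ α)..1, G k s) :
    ∀ n, ∀ t ∈ Set.Icc (0:ℝ) 1,
      G n t = ∑ j ∈ Finset.range (n+1), caux α n j * t ^ (eaux α j) := by
  intro n
  induction n with
  | zero =>
      intro t ht
      simp [hG0, caux, Paux_zero, eaux_zero, Real.rpow_zero]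
  | succ n ih =>
      intro t ht
      obtain ⟨ht0, ht1⟩ := ht
      have ha0 : 0 ≤ t ^ α := Real.rpow_nonneg ht0 α
      have ha1 : t ^ α ≤ 1 := Real.rpow_le_one ht0 ht1 h0.le
      rw [hGsucc]
      have hcong : (∫ s in (t^α)..1, G n s)
          = ∫ s in (t^α)..1, ∑ j ∈ Finset.range (n+1), caux α n j * s ^ (eaux α j) := by
        apply intervalIntegral.integral_congr
        intro s hs
        rw [Set.uIcc_of_le ha1] at hs
        exact ih s ⟨le_trans ha0 hs.1, hs.2⟩
      rw [hcong, intervalIntegral.integral_finset_sum (fun j _ =>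
        ((intervalIntegral.intervalIntegrable_rpow'
          (by have := eaux_nonneg h0 (α:=α) j; linarith)).const_mul _))]
      have hint : ∀ j ∈ Finset.range (n+1),
          (∫ s in (t^α)..1, caux α n j * s ^ (eaux α j))
            = -caux α (n+1) (j+1) + caux α (n+1) (j+1) * t ^ (eaux α (j+1)) := by
        intro j _
        rw [intervalIntegral.integral_const_mul,
          integral_rpow (Or.inl (by have := eaux_nonneg h0 (α:=α) j; linarith))]
        rw [Real.one_rpow, ← Real.rpow_mul ht0, ← eaux_succ']
        rw [crec h0 h1 n j]
        have he := (eaux_add_one_pos h0 (α := α) j).ne'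
        field_simp
        ring
      rw [Finset.sum_congr rfl hint, Finset.sum_add_distrib]
      have hkey : ∑ j ∈ Finset.range (n+1), -caux α (n+1) (j+1) = caux α (n+1) 0 := by
        have h2 := key h0 h1 (n+1) (by omega)
        rw [Finset.sum_range_succ'] at h2
        have h3 : ∑ j ∈ Finset.range (n+1), -caux α (n+1) (j+1)
            = -∑ j ∈ Finset.range (n+1), caux α (n+1) (j+1) := by
          rw [Finset.sum_neg_distrib]
        rw [h3]; linarith
      rw [hkey]
      rw [Finset.sum_range_succ' (fun j => caux α (n+1) j * t ^ (eaux α j)) (n+1)]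
      rw [eaux_zero, Real.rpow_zero, mul_one]
      exact add_comm _ _

/-- For `φ(t) = t^α`, the iterated integral
`∫₀¹ ∫_{t₁^α}^1 ⋯ ∫_{t_{n−1}^α}^1 dt_n ⋯ dt₁` equals
`α^{n(n−1)/2} (1−α)^n / ((1−α)(1−α²)⋯(1−α^n))`. -/
theorem stmt_11 (α : ℝ) (hα : α ∈ Ioo (0:ℝ) 1)
    (G : ℕ → ℝ → ℝ)
    (hG0 : ∀ t, G 0 t = 1)
    (hGsucc : ∀ k t, G (k + 1) t = ∫ s in (t ^ α)..1, G k s) :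
    ∀ n : ℕ, 1 ≤ n →
      (∫ t in (0:ℝ)..1, G (n - 1) t) =
        α ^ (n * (n - 1) / 2) * (1 - α) ^ n /
          ∏ k ∈ Finset.Icc 1 n, (1 - α ^ k) := by
  obtain ⟨h0, h1⟩ := hα
  intro n hn
  obtain ⟨m, rfl⟩ : ∃ m, n = m + 1 := ⟨n-1, by omega⟩
  have h00 : (0:ℝ)^α = 0 := Real.zero_rpow (ne_of_gt h0)
  have hG := hGsucc m 0
  rw [h00] at hG
  have hs : m + 1 - 1 = m := by omega
  rw [hs, ← hG]
  rw [Gform h0 h1 G hG0 hGsucc (m+1) 0 ⟨le_refl 0, by norm_num⟩]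
  rw [Finset.sum_range_succ' (fun j => caux α (m+1) j * (0:ℝ) ^ (eaux α j)) (m+1)]
  have hz : ∑ j ∈ Finset.range (m+1),
      caux α (m+1) (j+1) * (0:ℝ) ^ (eaux α (j+1)) = 0 := by
    apply Finset.sum_eq_zero
    intro j _
    rw [Real.zero_rpow (ne_of_gt (eaux_pos h0 (j+1) (by omega)))]
    ring
  rw [hz, eaux_zero, Real.rpow_zero, mul_one, zero_add]
  rw [caux, Nat.sub_zero, Paux_zero, one_mul, Nat.choose_two_right, pow_zero, one_mul,
    prodIcc, hs]
end

section
/- For α ∈ (0,1), the power series 1 + Σ_{n=1}^∞ (−λ)^n α^{n(n−1)/2}(1−α)^n / ((1−α)(1−α²)⋯(1−α^n)) equals the infinite product ∏_{n=1}^∞ (1 − λ(1−α)α^{n−1}) for all λ ∈ ℂ (both sides being entire functions of λ). -/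
open Finset

open Filter Topology

noncomputable def qterm (a : ℝ) (z : ℂ) (n : ℕ) : ℂ :=
  (-z) ^ (n + 1) * (a : ℂ) ^ ((n + 1) * n / 2) * (1 - (a : ℂ)) ^ (n + 1) /
    ∏ k ∈ Finset.range (n + 1), (1 - (a : ℂ) ^ (k + 1))

section aux
variable {a : ℝ} (h0 : 0 < a) (h1 : a < 1)

include h0 h1 in
lemma qden_ne (k : ℕ) : (1 - (a : ℂ) ^ (k + 1)) ≠ 0 := by
  have hlt : a ^ (k + 1) < 1 := pow_lt_one₀ h0.le h1 (Nat.succ_ne_zero k)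
  intro h
  rw [sub_eq_zero] at h
  have : ((a ^ (k + 1) : ℝ) : ℂ) = ((1 : ℝ) : ℂ) := by push_cast; exact h.symm
  have := Complex.ofReal_injective this
  linarith

include h0 h1 in
lemma qprod_ne (n : ℕ) : (∏ k ∈ Finset.range n, (1 - (a : ℂ) ^ (k + 1))) ≠ 0 :=
  Finset.prod_ne_zero_iff.2 fun k _ => qden_ne h0 h1 k

include h0 h1 in
lemma qterm_step (z : ℂ) (n : ℕ) :
    (1 - (a : ℂ) ^ (n + 2)) * qterm a z (n + 1) =
      -z * (1 - (a : ℂ)) * (a : ℂ) ^ (n + 1) * qterm a z n := by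
  have hpow : (n + 1 + 1) * (n + 1) / 2 = (n + 1) * n / 2 + (n + 1) := by
    obtain ⟨m, hm⟩ := Nat.even_mul_succ_self n
    have h2 : (n + 1) * n = m + m := by rw [mul_comm]; exact hm
    have h1' : (n + 1 + 1) * (n + 1) = m + m + 2 * (n + 1) := by
      rw [show (n + 1 + 1) * (n + 1) = (n + 1) * n + 2 * (n + 1) from by ring, h2]
    rw [h1', h2]; omega
  have hP0 : (∏ k ∈ Finset.range (n + 1), (1 - (a : ℂ) ^ (k + 1))) ≠ 0 := qprod_ne h0 h1 _
  have hP1 : (∏ k ∈ Finset.range (n + 1 + 1), (1 - (a : ℂ) ^ (k + 1))) ≠ 0 := qprod_ne h0 h1 _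
  simp only [qterm]
  rw [hpow, pow_add (a : ℂ) ((n + 1) * n / 2) (n + 1)]
  rw [mul_div_assoc', mul_div_assoc', div_eq_div_iff hP1 hP0, Finset.prod_range_succ (fun k => 1 - (a : ℂ) ^ (k + 1)) (n + 1)]
  ring

omit h0 h1 in
lemma qterm_scale (c z : ℂ) (n : ℕ) : qterm a (c * z) n = c ^ (n + 1) * qterm a z n := by
  simp only [qterm, neg_mul, mul_pow]
  ring
end aux

section aux2
variable {a : ℝ} (h0 : 0 < a) (h1 : a < 1)

include h0 h1 in
lemma qterm_norm_step (z : ℂ) (n : ℕ) :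
    (1 - a ^ (n + 2)) * ‖qterm a z (n + 1)‖ =
      ‖z‖ * (1 - a) * a ^ (n + 1) * ‖qterm a z n‖ := by
  have h := congrArg norm (qterm_step h0 h1 z n)
  have e1 : (1 - (a : ℂ) ^ (n + 2)) = ((1 - a ^ (n + 2) : ℝ) : ℂ) := by push_cast; ring
  have e2 : (1 - (a : ℂ)) = ((1 - a : ℝ) : ℂ) := by push_cast; ring
  have e3 : ((a : ℂ)) ^ (n + 1) = ((a ^ (n + 1) : ℝ) : ℂ) := by push_cast; ring
  rw [e1, e2, e3, norm_mul, norm_mul, norm_mul, norm_mul, norm_neg] at h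
  simp only [Complex.norm_real, Real.norm_eq_abs] at h
  rw [abs_of_pos (sub_pos.2 (pow_lt_one₀ h0.le h1 (by omega : n + 2 ≠ 0))),
    abs_of_pos (sub_pos.2 h1), abs_of_pos (pow_pos h0 (n + 1))] at h
  linarith [h]

include h0 h1 in
lemma qterm_summable_norm (z : ℂ) : Summable fun n => ‖qterm a z n‖ := by
  apply summable_of_ratio_norm_eventually_le (r := 1 / 2) (by norm_num)
  have ht : Tendsto (fun n : ℕ => ‖z‖ * a ^ (n + 1)) atTop (𝓝 0) := by
    have : Tendsto (fun n : ℕ => a ^ (n + 1)) atTop (𝓝 0) :=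
      (tendsto_pow_atTop_nhds_zero_of_lt_one h0.le h1).comp (tendsto_add_atTop_nat 1)
    simpa using this.const_mul ‖z‖
  filter_upwards [ht.eventually (gt_mem_nhds (by norm_num : (0 : ℝ) < 1 / 2))] with n hn
  simp only [norm_norm]
  have key := qterm_norm_step h0 h1 z n
  have hd : 0 < 1 - a ^ (n + 2) := sub_pos.2 (pow_lt_one₀ h0.le h1 (by omega))
  have haa : a ^ (n + 2) ≤ a := by
    calc a ^ (n + 2) ≤ a ^ 1 := pow_le_pow_of_le_one h0.le h1.le (by omega)
    _ = a := pow_one a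
  have hx : 0 ≤ ‖qterm a z (n + 1)‖ := norm_nonneg _
  have hy : 0 ≤ ‖qterm a z n‖ := norm_nonneg _
  have ha1 : 0 < 1 - a := sub_pos.2 h1
  nlinarith [mul_nonneg hy ha1.le, mul_nonneg hy (mul_nonneg (norm_nonneg z) (pow_nonneg h0.le (n+1)))]

include h0 h1 in
lemma qterm_summable (z : ℂ) : Summable (qterm a z) :=
  (qterm_summable_norm h0 h1 z).of_norm

include h0 h1 in
lemma qFE (z : ℂ) :
    1 + ∑' n, qterm a z n =
      (1 - z * (1 - (a : ℂ))) * (1 + ∑' n, qterm a ((a : ℂ) * z) n) := by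
  have hs : Summable (qterm a z) := qterm_summable h0 h1 z
  have hs' : Summable (qterm a ((a : ℂ) * z)) := qterm_summable h0 h1 _
  have hne : (1 - (a : ℂ)) ≠ 0 := by simpa using qden_ne h0 h1 0
  have claim : ∀ n, qterm a z (n + 1) - qterm a ((a : ℂ) * z) (n + 1) =
      -z * (1 - (a : ℂ)) * qterm a ((a : ℂ) * z) n := by
    intro n
    rw [qterm_scale, qterm_scale]
    linear_combination qterm_step h0 h1 z n
  have base : qterm a z 0 - qterm a ((a : ℂ) * z) 0 = -z * (1 - (a : ℂ)) := by
    simp only [qterm, zero_add, Finset.prod_range_one, pow_one, pow_zero, mul_one]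
    field_simp
    ring
  have hsub : Summable (fun n => qterm a z n - qterm a ((a : ℂ) * z) n) := hs.sub hs'
  have e := Summable.tsum_eq_zero_add hsub
  rw [base] at e
  simp only [claim] at e
  rw [tsum_mul_left] at e
  have e2 : ∑' n, (qterm a z n - qterm a ((a : ℂ) * z) n) =
      (∑' n, qterm a z n) - ∑' n, qterm a ((a : ℂ) * z) n := Summable.tsum_sub hs hs'
  rw [e2] at e
  linear_combination e

include h0 h1 in
lemma qiter (z : ℂ) (N : ℕ) :
    1 + ∑' n, qterm a z n =
      (∏ k ∈ Finset.range N, (1 - z * (1 - (a : ℂ)) * (a : ℂ) ^ k)) *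
        (1 + ∑' n, qterm a ((a : ℂ) ^ N * z) n) := by
  induction N with
  | zero => simp
  | succ N ih =>
    rw [ih, Finset.prod_range_succ]
    rw [qFE h0 h1 ((a : ℂ) ^ N * z)]
    have harg : (a : ℂ) * ((a : ℂ) ^ N * z) = (a : ℂ) ^ (N + 1) * z := by ring
    simp only [harg]
    ring

include h0 h1 in
lemma qtail (z : ℂ) :
    Tendsto (fun N : ℕ => ∑' n, qterm a ((a : ℂ) ^ N * z) n) atTop (𝓝 0) := by
  have hC := qterm_summable_norm h0 h1 z
  set C := ∑' n, ‖qterm a z n‖ with hCdef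
  rw [tendsto_zero_iff_norm_tendsto_zero]
  apply squeeze_zero (fun N => norm_nonneg _) (g := fun N => a ^ N * C)
  · intro N
    have hb : ∀ n, ‖qterm a ((a : ℂ) ^ N * z) n‖ = (a ^ N) ^ (n + 1) * ‖qterm a z n‖ := by
      intro n
      rw [qterm_scale, norm_mul, norm_pow, norm_pow, Complex.norm_real, Real.norm_eq_abs,
        abs_of_pos h0]
    have hle1 : ∀ n : ℕ, (a ^ N) ^ (n + 1) ≤ a ^ N := by
      intro n
      calc (a ^ N) ^ (n + 1) ≤ (a ^ N) ^ 1 :=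
        pow_le_pow_of_le_one (by positivity) (pow_le_one₀ h0.le h1.le) (by omega)
      _ = a ^ N := pow_one _
    have hsum1 : Summable (fun n => (a ^ N) ^ (n + 1) * ‖qterm a z n‖) := by
      apply Summable.of_nonneg_of_le (fun n => by positivity)
        (fun n => ?_) hC
      calc (a ^ N) ^ (n + 1) * ‖qterm a z n‖ ≤ 1 * ‖qterm a z n‖ := by
            apply mul_le_mul_of_nonneg_right _ (norm_nonneg _)
            exact pow_le_one₀ (by positivity) (pow_le_one₀ h0.le h1.le)
      _ = ‖qterm a z n‖ := one_mul _
    calc ‖∑' n, qterm a ((a : ℂ) ^ N * z) n‖ ≤ ∑' n, ‖qterm a ((a : ℂ) ^ N * z) n‖ := by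
          apply norm_tsum_le_tsum_norm
          exact (funext hb : (fun n => ‖qterm a ((a : ℂ) ^ N * z) n‖) = _) ▸ hsum1
      _ = ∑' n, (a ^ N) ^ (n + 1) * ‖qterm a z n‖ := tsum_congr hb
      _ ≤ ∑' n, a ^ N * ‖qterm a z n‖ := by
          apply Summable.tsum_le_tsum (fun n => mul_le_mul_of_nonneg_right (hle1 n) (norm_nonneg _))
            hsum1 (hC.mul_left _)
      _ = a ^ N * C := tsum_mul_left
  · have : Tendsto (fun N : ℕ => a ^ N) atTop (𝓝 0) :=
      tendsto_pow_atTop_nhds_zero_of_lt_one h0.le h1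
    simpa using this.mul_const C

include h0 h1 in
lemma qprod_hasProd (z : ℂ) :
    HasProd (fun n : ℕ => 1 - z * (1 - (a : ℂ)) * (a : ℂ) ^ n)
      (∏' n : ℕ, (1 - z * (1 - (a : ℂ)) * (a : ℂ) ^ n)) := by
  by_cases hz : ∀ n : ℕ, 1 - z * (1 - (a : ℂ)) * (a : ℂ) ^ n ≠ 0
  · have hlog : Summable (fun n : ℕ => Complex.log (1 - z * (1 - (a : ℂ)) * (a : ℂ) ^ n)) := by
      apply Summable.of_norm_bounded_eventually_nat
        (g := fun n => 3 / 2 * ‖z * (1 - (a : ℂ))‖ * a ^ n)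
      · have : Summable (fun n : ℕ => a ^ n) := summable_geometric_of_lt_one h0.le h1
        simpa [mul_assoc] using this.mul_left (3 / 2 * ‖z * (1 - (a : ℂ))‖)
      · have ht : Tendsto (fun n : ℕ => ‖z * (1 - (a : ℂ))‖ * a ^ n) atTop (𝓝 0) := by
          simpa using (tendsto_pow_atTop_nhds_zero_of_lt_one h0.le h1).const_mul
            ‖z * (1 - (a : ℂ))‖
        filter_upwards [ht.eventually (ge_mem_nhds (by norm_num : (0 : ℝ) < 1 / 2))] with n hn
        have hw : ‖-(z * (1 - (a : ℂ)) * (a : ℂ) ^ n)‖ ≤ 1 / 2 := by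
          rw [norm_neg, norm_mul, norm_pow, Complex.norm_real, Real.norm_eq_abs, abs_of_pos h0]
          exact hn
        have := Complex.norm_log_one_add_half_le_self hw
        rw [show (1 : ℂ) + -(z * (1 - (a : ℂ)) * (a : ℂ) ^ n) =
          1 - z * (1 - (a : ℂ)) * (a : ℂ) ^ n from by ring] at this
        calc ‖Complex.log (1 - z * (1 - (a : ℂ)) * (a : ℂ) ^ n)‖ ≤
            3 / 2 * ‖-(z * (1 - (a : ℂ)) * (a : ℂ) ^ n)‖ := this
          _ = 3 / 2 * ‖z * (1 - (a : ℂ))‖ * a ^ n := by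
            rw [norm_neg, norm_mul, norm_pow, Complex.norm_real, Real.norm_eq_abs, abs_of_pos h0]; ring
    have hmult : Multipliable (fun n : ℕ => 1 - z * (1 - (a : ℂ)) * (a : ℂ) ^ n) :=
      Complex.multipliable_of_summable_log hlog
    exact hmult.hasProd
  · push_neg at hz
    obtain ⟨n0, hn0⟩ := hz
    have hzero : HasProd (fun n : ℕ => 1 - z * (1 - (a : ℂ)) * (a : ℂ) ^ n) 0 := by
      rw [HasProd]
      apply Tendsto.congr' _ tendsto_const_nhds
      filter_upwards [eventually_ge_atTop ({n0} : Finset ℕ)] with s hs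
      exact (Finset.prod_eq_zero (hs (Finset.mem_singleton_self n0)) hn0).symm
    rw [hzero.tprod_eq]
    exact hzero
end aux2

/-- Euler-type identity: for `α ∈ (0,1)` and every `λ ∈ ℂ`,
`1 + Σ_{n≥1} (−λ)^n α^{n(n−1)/2}(1−α)^n / ((1−α)⋯(1−α^n))
  = ∏_{n≥1} (1 − λ(1−α)α^{n−1})`. -/
theorem stmt_12 (α : ℝ) (hα : α ∈ Set.Ioo (0:ℝ) 1) (z : ℂ) :
    1 + ∑' n : ℕ,
        ((-z) ^ (n + 1) * (α : ℂ) ^ ((n + 1) * n / 2) * (1 - (α : ℂ)) ^ (n + 1) /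
          ∏ k ∈ Finset.range (n + 1), (1 - (α : ℂ) ^ (k + 1))) =
      ∏' n : ℕ, (1 - z * (1 - (α : ℂ)) * (α : ℂ) ^ n) := by
  obtain ⟨h0, h1⟩ := hα
  show 1 + ∑' n, qterm α z n = _
  have key : Tendsto (fun N : ℕ =>
      (∏ k ∈ Finset.range N, (1 - z * (1 - (α : ℂ)) * (α : ℂ) ^ k)) *
        (1 + ∑' n, qterm α ((α : ℂ) ^ N * z) n)) atTop (𝓝 (1 + ∑' n, qterm α z n)) := by
    have e : (fun N : ℕ =>
        (∏ k ∈ Finset.range N, (1 - z * (1 - (α : ℂ)) * (α : ℂ) ^ k)) *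
          (1 + ∑' n, qterm α ((α : ℂ) ^ N * z) n)) = fun _ => 1 + ∑' n, qterm α z n :=
      funext fun N => (qiter h0 h1 z N).symm
    rw [e]
    exact tendsto_const_nhds
  have key2 : Tendsto (fun N : ℕ =>
      (∏ k ∈ Finset.range N, (1 - z * (1 - (α : ℂ)) * (α : ℂ) ^ k)) *
        (1 + ∑' n, qterm α ((α : ℂ) ^ N * z) n)) atTop
      (𝓝 ((∏' n : ℕ, (1 - z * (1 - (α : ℂ)) * (α : ℂ) ^ n)) * (1 + 0))) :=
    ((qprod_hasProd h0 h1 z).tendsto_prod_nat).mul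
      (tendsto_const_nhds.add (qtail h0 h1 z))
  have := tendsto_nhds_unique key key2
  rw [this]; ring
end

section
/- Let φ : [0,1] → [0,1] be a strictly increasing continuous bijection with φ(x) ≥ x. Then ∫₀¹ ∫_{φ⁻²(t)}^{φ(t)} (φ(s) − φ⁻¹(t)) ds dt = 1 − 3∫₀¹ φ(t)·φ⁻¹(t) dt, where φ⁻² = φ⁻¹ ∘ φ⁻¹. -/
open Set intervalIntegral MeasureTheory


lemma key_lemma (f g h : ℝ → ℝ)
    (hf : StrictMonoOn f (Icc 0 1)) (hf0 : f 0 = 0)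
    (hfm : MapsTo f (Icc 0 1) (Icc 0 1)) (hgm : MapsTo g (Icc 0 1) (Icc 0 1))
    (hfg : ∀ u ∈ Icc (0:ℝ) 1, f (g u) = u)
    (hh : MonotoneOn h (Icc 0 1)) :
    (∫ t in (0:ℝ)..1, ∫ u in (f t)..1, h u) = ∫ u in (0:ℝ)..1, h u * g u := by
  set cl : ℝ → ℝ := fun x => min 1 (max 0 x) with hcl_def
  have clmono : Monotone cl := fun a b hab => min_le_min le_rfl (max_le_max le_rfl hab)
  have clmem : ∀ x, cl x ∈ Icc (0:ℝ) 1 :=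
    fun x => ⟨le_min zero_le_one (le_max_left 0 x), min_le_left _ _⟩
  have cleq : ∀ x ∈ Icc (0:ℝ) 1, cl x = x := by
    intro x hx
    simp [hcl_def, max_eq_right hx.1, min_eq_right hx.2]
  set fc : ℝ → ℝ := fun x => f (cl x) with hfc_def
  set hc : ℝ → ℝ := fun x => h (cl x) with hhc_def
  have fcmono : Monotone fc := fun a b hab => (hf.monotoneOn) (clmem a) (clmem b) (clmono hab)
  have hcmono : Monotone hc := fun a b hab => hh (clmem a) (clmem b) (clmono hab)
  have fcmeas : Measurable fc := fcmono.measurable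
  have hcmeas : Measurable hc := hcmono.measurable
  set μ := volume.restrict (Ioc (0:ℝ) 1) with hμ
  haveI : IsFiniteMeasure μ := by
    constructor
    rw [hμ, Measure.restrict_apply_univ]
    exact measure_Ioc_lt_top
  set S : Set (ℝ × ℝ) := {p | fc p.1 < p.2} with hS
  have Smeas : MeasurableSet S := measurableSet_lt (fcmeas.comp measurable_fst) measurable_snd
  set k : ℝ × ℝ → ℝ := S.indicator (fun p => hc p.2) with hk
  have kmeas : Measurable k := (hcmeas.comp measurable_snd).indicator Smeas
  have kbound : ∀ p, ‖k p‖ ≤ max ‖h 0‖ ‖h 1‖ := by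
    intro p
    refine le_trans (norm_indicator_le_norm_self _ _) ?_
    have l := hh (left_mem_Icc.2 zero_le_one) (clmem p.2) (clmem p.2).1
    have r := hh (clmem p.2) (right_mem_Icc.2 zero_le_one) (clmem p.2).2
    simpa [Real.norm_eq_abs] using abs_le_max_abs_abs l r
  have kint : Integrable k (μ.prod μ) :=
    (integrable_const (max ‖h 0‖ ‖h 1‖)).mono' kmeas.aestronglyMeasurable (ae_of_all _ kbound)
  have step1 : (∫ t in (0:ℝ)..1, ∫ u in (f t)..1, h u) = ∫ t in Ioc (0:ℝ) 1, ∫ u in Ioc (0:ℝ) 1, k (t, u) := by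
    rw [integral_of_le zero_le_one]
    refine setIntegral_congr_fun measurableSet_Ioc fun t ht => ?_
    have htI : t ∈ Icc (0:ℝ) 1 := Ioc_subset_Icc_self ht
    have hft : f t ∈ Icc (0:ℝ) 1 := hfm htI
    have e1 : ∫ u in Ioc (0:ℝ) 1, k (t, u) = ∫ u in Ioc (0:ℝ) 1, (Ioi (f t)).indicator h u := by
      refine setIntegral_congr_fun measurableSet_Ioc fun u hu => ?_
      have huI : u ∈ Icc (0:ℝ) 1 := Ioc_subset_Icc_self hu
      simp only [hk, hS, Set.indicator_apply, mem_setOf_eq, mem_Ioi, hfc_def, hhc_def,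
        cleq t htI, cleq u huI]
    rw [e1, setIntegral_indicator measurableSet_Ioi]
    have e2 : Ioc (0:ℝ) 1 ∩ Ioi (f t) = Ioc (f t) 1 := by
      ext u
      simp only [mem_inter_iff, mem_Ioc, mem_Ioi]
      exact ⟨fun ⟨⟨_, h1⟩, h2⟩ => ⟨h2, h1⟩,
        fun ⟨h2, h1⟩ => ⟨⟨lt_of_le_of_lt hft.1 h2, h1⟩, h2⟩⟩
    rw [e2, ← integral_of_le hft.2]
  have swap : (∫ t in Ioc (0:ℝ) 1, ∫ u in Ioc (0:ℝ) 1, k (t, u)) =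
      ∫ u in Ioc (0:ℝ) 1, ∫ t in Ioc (0:ℝ) 1, k (t, u) := by
    exact integral_integral_swap (f := fun t u => k (t, u)) kint
  have step2 : (∫ u in Ioc (0:ℝ) 1, ∫ t in Ioc (0:ℝ) 1, k (t, u)) = ∫ u in Ioc (0:ℝ) 1, h u * g u := by
    refine setIntegral_congr_fun measurableSet_Ioc fun u hu => ?_
    have huI : u ∈ Icc (0:ℝ) 1 := Ioc_subset_Icc_self hu
    have hgu : g u ∈ Icc (0:ℝ) 1 := hgm huI
    have hfgu : f (g u) = u := hfg u huI
    have e1 : ∫ t in Ioc (0:ℝ) 1, k (t, u) = ∫ t in Ioc (0:ℝ) 1, {t : ℝ | fc t < u}.indicator (fun _ => h u) t := by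
      refine setIntegral_congr_fun measurableSet_Ioc fun t ht => ?_
      have htI : t ∈ Icc (0:ℝ) 1 := Ioc_subset_Icc_self ht
      simp only [hk, hS, Set.indicator_apply, mem_setOf_eq, hhc_def, cleq u huI]
    have smeas : MeasurableSet {t : ℝ | fc t < u} := measurableSet_lt fcmeas measurable_const
    rw [e1, setIntegral_indicator smeas]
    have e2 : Ioc (0:ℝ) 1 ∩ {t : ℝ | fc t < u} = Ioo 0 (g u) := by
      ext t
      simp only [mem_inter_iff, mem_Ioc, mem_Ioo, mem_setOf_eq]
      constructor
      · rintro ⟨⟨ht0, ht1⟩, hlt⟩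
        have htI : t ∈ Icc (0:ℝ) 1 := ⟨ht0.le, ht1⟩
        have hfct : fc t = f t := congrArg f (cleq t htI)
        rw [hfct, ← hfgu] at hlt
        exact ⟨ht0, (hf.lt_iff_lt htI hgu).1 hlt⟩
      · rintro ⟨ht0, htg⟩
        have ht1 : t ≤ 1 := le_of_lt (lt_of_lt_of_le htg hgu.2)
        have htI : t ∈ Icc (0:ℝ) 1 := ⟨ht0.le, ht1⟩
        refine ⟨⟨ht0, ht1⟩, ?_⟩
        show fc t < u
        have hfct : fc t = f t := congrArg f (cleq t htI)
        rw [hfct, ← hfgu]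
        exact (hf.lt_iff_lt htI hgu).2 htg
    rw [e2, setIntegral_const, Real.volume_real_Ioo_of_le hgu.1, sub_zero,
      smul_eq_mul, mul_comm]
  rw [step1, swap, step2, integral_of_le zero_le_one]


lemma young_eq (f g : ℝ → ℝ)
    (hf : StrictMonoOn f (Icc 0 1)) (hf0 : f 0 = 0)
    (hfm : MapsTo f (Icc 0 1) (Icc 0 1)) (hgm : MapsTo g (Icc 0 1) (Icc 0 1))
    (hfg : ∀ u ∈ Icc (0:ℝ) 1, f (g u) = u)
    {c : ℝ} (hc : c ∈ Icc (0:ℝ) 1) :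
    (∫ t in (0:ℝ)..c, g t) = c * g c - ∫ x in (0:ℝ)..(g c), f x := by
  set cl : ℝ → ℝ := fun x => min 1 (max 0 x) with hcl_def
  have clmono : Monotone cl := fun a b hab => min_le_min le_rfl (max_le_max le_rfl hab)
  have clmem : ∀ x, cl x ∈ Icc (0:ℝ) 1 :=
    fun x => ⟨le_min zero_le_one (le_max_left 0 x), min_le_left _ _⟩
  have cleq : ∀ x ∈ Icc (0:ℝ) 1, cl x = x := by
    intro x hx
    simp [hcl_def, max_eq_right hx.1, min_eq_right hx.2]
  set fc : ℝ → ℝ := fun x => f (cl x) with hfc_def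
  have fcmono : Monotone fc := fun a b hab => (hf.monotoneOn) (clmem a) (clmem b) (clmono hab)
  have fcmeas : Measurable fc := fcmono.measurable
  have hfnn : ∀ x ∈ Icc (0:ℝ) 1, 0 ≤ f x := by
    intro x hx
    rw [← hf0]
    exact hf.monotoneOn (left_mem_Icc.2 zero_le_one) hx hx.1
  set μx := volume.restrict (Ioc (0:ℝ) 1) with hμx
  set μt := volume.restrict (Ioc (0:ℝ) c) with hμt
  haveI : IsFiniteMeasure μx := by
    constructor; rw [hμx, Measure.restrict_apply_univ]; exact measure_Ioc_lt_top
  haveI : IsFiniteMeasure μt := by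
    constructor; rw [hμt, Measure.restrict_apply_univ]; exact measure_Ioc_lt_top
  set S : Set (ℝ × ℝ) := {p | fc p.1 < p.2} with hS
  have Smeas : MeasurableSet S := measurableSet_lt (fcmeas.comp measurable_fst) measurable_snd
  set k : ℝ × ℝ → ℝ := S.indicator (fun _ => (1:ℝ)) with hk
  have kmeas : Measurable k := measurable_const.indicator Smeas
  have kbound : ∀ p, ‖k p‖ ≤ 1 := by
    intro p
    refine le_trans (norm_indicator_le_norm_self _ _) ?_
    simp
  -- we integrate fun t x => k (x, t) over μt.prod μx
  have kint : Integrable (Function.uncurry fun t x => k (x, t)) (μt.prod μx) := by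
    have m : Measurable (Function.uncurry fun t x => k (x, t)) :=
      kmeas.comp (measurable_snd.prodMk measurable_fst)
    exact (integrable_const 1).mono' m.aestronglyMeasurable (ae_of_all _ fun p => kbound (p.2, p.1))
  have step1 : (∫ t in (0:ℝ)..c, g t) = ∫ t in Ioc (0:ℝ) c, ∫ x in Ioc (0:ℝ) 1, k (x, t) := by
    rw [integral_of_le hc.1]
    refine setIntegral_congr_fun measurableSet_Ioc fun t ht => ?_
    have htI : t ∈ Icc (0:ℝ) 1 := ⟨ht.1.le, ht.2.trans hc.2⟩
    have hgt : g t ∈ Icc (0:ℝ) 1 := hgm htI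
    have hfgt : f (g t) = t := hfg t htI
    have e1 : ∫ x in Ioc (0:ℝ) 1, k (x, t) =
        ∫ x in Ioc (0:ℝ) 1, {x : ℝ | fc x < t}.indicator (fun _ => (1:ℝ)) x := by
      refine setIntegral_congr_fun measurableSet_Ioc fun x hx => ?_
      simp only [hk, hS, Set.indicator_apply, mem_setOf_eq]
    have smeas : MeasurableSet {x : ℝ | fc x < t} := measurableSet_lt fcmeas measurable_const
    rw [e1, setIntegral_indicator smeas]
    have e2 : Ioc (0:ℝ) 1 ∩ {x : ℝ | fc x < t} = Ioo 0 (g t) := by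
      ext x
      simp only [mem_inter_iff, mem_Ioc, mem_Ioo, mem_setOf_eq]
      constructor
      · rintro ⟨⟨hx0, hx1⟩, hlt⟩
        have hxI : x ∈ Icc (0:ℝ) 1 := ⟨hx0.le, hx1⟩
        have hfcx : fc x = f x := congrArg f (cleq x hxI)
        rw [hfcx, ← hfgt] at hlt
        exact ⟨hx0, (hf.lt_iff_lt hxI hgt).1 hlt⟩
      · rintro ⟨hx0, hxg⟩
        have hx1 : x ≤ 1 := le_of_lt (lt_of_lt_of_le hxg hgt.2)
        have hxI : x ∈ Icc (0:ℝ) 1 := ⟨hx0.le, hx1⟩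
        refine ⟨⟨hx0, hx1⟩, ?_⟩
        show fc x < t
        have hfcx : fc x = f x := congrArg f (cleq x hxI)
        rw [hfcx, ← hfgt]
        exact (hf.lt_iff_lt hxI hgt).2 hxg
    rw [e2, setIntegral_const, Real.volume_real_Ioo_of_le hgt.1, sub_zero,
      smul_eq_mul, mul_one]
  have swap : (∫ t in Ioc (0:ℝ) c, ∫ x in Ioc (0:ℝ) 1, k (x, t)) =
      ∫ x in Ioc (0:ℝ) 1, ∫ t in Ioc (0:ℝ) c, k (x, t) :=
    integral_integral_swap (f := fun t x => k (x, t)) kint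
  set W : ℝ → ℝ := fun x => max (c - f x) 0 with hW
  have step2 : (∫ x in Ioc (0:ℝ) 1, ∫ t in Ioc (0:ℝ) c, k (x, t)) = ∫ x in Ioc (0:ℝ) 1, W x := by
    refine setIntegral_congr_fun measurableSet_Ioc fun x hx => ?_
    have hxI : x ∈ Icc (0:ℝ) 1 := Ioc_subset_Icc_self hx
    have hfcx : fc x = f x := congrArg f (cleq x hxI)
    have e1 : ∫ t in Ioc (0:ℝ) c, k (x, t) =
        ∫ t in Ioc (0:ℝ) c, (Ioi (f x)).indicator (fun _ => (1:ℝ)) t := by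
      refine setIntegral_congr_fun measurableSet_Ioc fun t ht => ?_
      simp only [hk, hS, Set.indicator_apply, mem_setOf_eq, mem_Ioi, hfcx]
    rw [e1, setIntegral_indicator measurableSet_Ioi, Ioc_inter_Ioi,
      max_eq_right (hfnn x hxI), setIntegral_const, Real.volume_real_Ioc, smul_eq_mul, mul_one]
  have hgc : g c ∈ Icc (0:ℝ) 1 := hgm hc
  have hfgc : f (g c) = c := hfg c hc
  have Want : AntitoneOn W (Icc (0:ℝ) 1) := by
    intro a ha b hb hab
    exact max_le_max (sub_le_sub_left (hf.monotoneOn ha hb hab) c) le_rfl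
  have i1 : IntervalIntegrable W volume 0 (g c) :=
    (Want.mono (by rw [uIcc_of_le hgc.1]; exact Icc_subset_Icc le_rfl hgc.2)).intervalIntegrable
  have i2 : IntervalIntegrable W volume (g c) 1 :=
    (Want.mono (by rw [uIcc_of_le hgc.2]; exact Icc_subset_Icc hgc.1 le_rfl)).intervalIntegrable
  have split : (∫ x in Ioc (0:ℝ) 1, W x) = (∫ x in (0:ℝ)..(g c), W x) + ∫ x in (g c)..1, W x := by
    rw [← integral_of_le zero_le_one]
    exact (integral_add_adjacent_intervals i1 i2).symm
  have part2 : (∫ x in (g c)..1, W x) = 0 := by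
    rw [integral_congr (g := fun _ => (0:ℝ)) ?_, intervalIntegral.integral_const, smul_zero]
    intro x hx
    rw [uIcc_of_le hgc.2] at hx
    have hxI : x ∈ Icc (0:ℝ) 1 := ⟨hgc.1.trans hx.1, hx.2⟩
    have : c ≤ f x := by
      rw [← hfgc]
      exact hf.monotoneOn hgc hxI hx.1
    simp [hW, max_eq_right, sub_nonpos.2 this]
  have part1 : (∫ x in (0:ℝ)..(g c), W x) = c * g c - ∫ x in (0:ℝ)..(g c), f x := by
    have e : (∫ x in (0:ℝ)..(g c), W x) = ∫ x in (0:ℝ)..(g c), (c - f x) := by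
      refine integral_congr fun x hx => ?_
      rw [uIcc_of_le hgc.1] at hx
      have hxI : x ∈ Icc (0:ℝ) 1 := ⟨hx.1, hx.2.trans hgc.2⟩
      have : f x ≤ c := by
        rw [← hfgc]
        exact hf.monotoneOn hxI hgc hx.2
      simp [hW, max_eq_left, sub_nonneg.2 this]
    have hfint : IntervalIntegrable f volume 0 (g c) := by
      refine (hf.monotoneOn.mono ?_).intervalIntegrable
      rw [uIcc_of_le hgc.1]; exact Icc_subset_Icc le_rfl hgc.2
    rw [e, integral_sub intervalIntegrable_const hfint, intervalIntegral.integral_const, sub_zero, smul_eq_mul,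
      mul_comm]
  rw [step1, swap, step2, split, part1, part2, add_zero]


theorem stmt_16 (φ ψ : ℝ → ℝ)
    (hmono : StrictMonoOn φ (Icc 0 1))
    (hcont : ContinuousOn φ (Icc 0 1))
    (h0 : φ 0 = 0) (h1 : φ 1 = 1)
    (hmaps : MapsTo φ (Icc 0 1) (Icc 0 1))
    (hge : ∀ x ∈ Icc (0:ℝ) 1, x ≤ φ x)
    (hinv : ∀ x ∈ Icc (0:ℝ) 1, ψ (φ x) = x ∧ φ (ψ x) = x) :
    (∫ t in (0:ℝ)..1, ∫ s in (ψ (ψ t))..(φ t), (φ s - ψ t)) =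
      1 - 3 * ∫ t in (0:ℝ)..1, φ t * ψ t := by
  have h0m : (0:ℝ) ∈ Icc (0:ℝ) 1 := left_mem_Icc.2 zero_le_one
  have h1m : (1:ℝ) ∈ Icc (0:ℝ) 1 := right_mem_Icc.2 zero_le_one
  -- ψ basic facts
  have hψmaps : MapsTo ψ (Icc 0 1) (Icc 0 1) := by
    intro x hx
    obtain ⟨y, hy, hyx⟩ := intermediate_value_Icc zero_le_one hcont (by rw [h0, h1]; exact hx)
    rw [← hyx, (hinv y hy).1]; exact hy
  have hψ0 : ψ 0 = 0 := by have := (hinv 0 h0m).1; rwa [h0] at this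
  have hψ1 : ψ 1 = 1 := by have := (hinv 1 h1m).1; rwa [h1] at this
  have hψmono : StrictMonoOn ψ (Icc 0 1) := by
    intro a ha b hb hab
    have : φ (ψ a) < φ (ψ b) := by rw [(hinv a ha).2, (hinv b hb).2]; exact hab
    exact (hmono.lt_iff_lt (hψmaps ha) (hψmaps hb)).1 this
  have hφnn : ∀ x ∈ Icc (0:ℝ) 1, 0 ≤ φ x := fun x hx => (hmaps hx).1
  have hψnn : ∀ x ∈ Icc (0:ℝ) 1, 0 ≤ ψ x := fun x hx => (hψmaps hx).1
  -- compositions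
  have hφφmono : StrictMonoOn (fun t => φ (φ t)) (Icc 0 1) :=
    fun a ha b hb hab => hmono (hmaps ha) (hmaps hb) (hmono ha hb hab)
  have hψψmono : StrictMonoOn (fun t => ψ (ψ t)) (Icc 0 1) :=
    fun a ha b hb hab => hψmono (hψmaps ha) (hψmaps hb) (hψmono ha hb hab)
  have hφφmaps : MapsTo (fun t => φ (φ t)) (Icc 0 1) (Icc 0 1) := fun x hx => hmaps (hmaps hx)
  have hψψmaps : MapsTo (fun t => ψ (ψ t)) (Icc 0 1) (Icc 0 1) := fun x hx => hψmaps (hψmaps hx)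
  have hφφ0 : φ (φ 0) = 0 := by rw [h0, h0]
  have hψψ0 : ψ (ψ 0) = 0 := by rw [hψ0, hψ0]
  have hinv1 : ∀ u ∈ Icc (0:ℝ) 1, φ (ψ u) = u := fun u hu => (hinv u hu).2
  have hinvK2 : ∀ u ∈ Icc (0:ℝ) 1, ψ (ψ (φ (φ u))) = u := by
    intro u hu
    rw [(hinv (φ u) (hmaps hu)).1, (hinv u hu).1]
  have hinvK3 : ∀ u ∈ Icc (0:ℝ) 1, φ (φ (ψ (ψ u))) = u := by
    intro u hu
    rw [(hinv (ψ u) (hψmaps hu)).2, (hinv u hu).2]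
  -- interval integrability of φ and ψ on subintervals of [0,1]
  have hφint : ∀ a b : ℝ, a ∈ Icc (0:ℝ) 1 → b ∈ Icc (0:ℝ) 1 → IntervalIntegrable φ volume a b :=
    fun a b ha hb => (hmono.monotoneOn.mono (uIcc_subset_Icc ha hb)).intervalIntegrable
  have hψint : ∀ a b : ℝ, a ∈ Icc (0:ℝ) 1 → b ∈ Icc (0:ℝ) 1 → IntervalIntegrable ψ volume a b :=
    fun a b ha hb => (hψmono.monotoneOn.mono (uIcc_subset_Icc ha hb)).intervalIntegrable
  -- key lemma instances
  have K1 : (∫ t in (0:ℝ)..1, ∫ u in (φ t)..1, φ u) = ∫ u in (0:ℝ)..1, φ u * ψ u :=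
    key_lemma φ ψ φ hmono h0 hmaps hψmaps hinv1 hmono.monotoneOn
  have K2 : (∫ t in (0:ℝ)..1, ∫ u in (ψ (ψ t))..1, φ u) = ∫ u in (0:ℝ)..1, φ u * φ (φ u) :=
    key_lemma (fun t => ψ (ψ t)) (fun u => φ (φ u)) φ hψψmono hψψ0 hψψmaps hφφmaps hinvK2
      hmono.monotoneOn
  have K3 : (∫ t in (0:ℝ)..1, ∫ u in (φ (φ t))..1, ψ u) = ∫ u in (0:ℝ)..1, ψ u * ψ (ψ u) :=
    key_lemma (fun t => φ (φ t)) (fun u => ψ (ψ u)) ψ hφφmono hφφ0 hφφmaps hψψmaps hinvK3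
      hψmono.monotoneOn
  -- young instances
  have Y1 : (∫ t in (0:ℝ)..1, ψ t) = 1 - ∫ x in (0:ℝ)..1, φ x := by
    have := young_eq φ ψ hmono h0 hmaps hψmaps hinv1 h1m
    rwa [hψ1, one_mul] at this
  set F1 : ℝ := ∫ x in (0:ℝ)..1, φ x with hF1
  set P1 : ℝ := ∫ x in (0:ℝ)..1, ψ x with hP1
  set C : ℝ := ∫ t in (0:ℝ)..1, φ t * ψ t with hC
  set M : ℝ := ∫ u in (0:ℝ)..1, φ u * φ (φ u) with hM
  set A1 : ℝ → ℝ := fun t => ∫ u in (ψ (ψ t))..1, φ u with hA1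
  set A2 : ℝ → ℝ := fun t => ∫ u in (φ t)..1, φ u with hA2
  -- pointwise inner integral decomposition
  have inner_eq : ∀ t ∈ Icc (0:ℝ) 1,
      (∫ s in (ψ (ψ t))..(φ t), (φ s - ψ t)) = A1 t - A2 t - φ t * ψ t + ψ t * ψ (ψ t) := by
    intro t ht
    have ha : ψ (ψ t) ∈ Icc (0:ℝ) 1 := hψψmaps ht
    have hb : φ t ∈ Icc (0:ℝ) 1 := hmaps ht
    have e1 : (∫ s in (ψ (ψ t))..(φ t), (φ s - ψ t)) =
        (∫ s in (ψ (ψ t))..(φ t), φ s) - (φ t - ψ (ψ t)) * ψ t := by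
      rw [integral_sub (hφint _ _ ha hb) intervalIntegrable_const,
        intervalIntegral.integral_const, smul_eq_mul]
    have e2 : (∫ s in (ψ (ψ t))..(φ t), φ s) + A2 t = A1 t :=
      integral_add_adjacent_intervals (hφint _ _ ha hb) (hφint _ _ hb h1m)
    have e2' : (∫ s in (ψ (ψ t))..(φ t), φ s) = A1 t - A2 t := by linarith
    rw [e1, e2']; ring
  have huIcc : uIcc (0:ℝ) 1 = Icc (0:ℝ) 1 := uIcc_of_le zero_le_one
  -- integrability of the four pieces
  have iA1 : IntervalIntegrable A1 volume 0 1 := by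
    apply AntitoneOn.intervalIntegrable
    rw [huIcc]
    intro s hs t ht hst
    have hs' := hψψmaps hs
    have ht' := hψψmaps ht
    have hle : ψ (ψ s) ≤ ψ (ψ t) := hψψmono.monotoneOn hs ht hst
    have e : (∫ u in (ψ (ψ s))..(ψ (ψ t)), φ u) + A1 t = A1 s :=
      integral_add_adjacent_intervals (hφint _ _ hs' ht') (hφint _ _ ht' h1m)
    have nn : 0 ≤ ∫ u in (ψ (ψ s))..(ψ (ψ t)), φ u := by
      apply intervalIntegral.integral_nonneg hle
      intro u hu
      exact hφnn u ⟨hs'.1.trans hu.1, hu.2.trans ht'.2⟩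
    linarith
  have iA2 : IntervalIntegrable A2 volume 0 1 := by
    apply AntitoneOn.intervalIntegrable
    rw [huIcc]
    intro s hs t ht hst
    have hs' := hmaps hs
    have ht' := hmaps ht
    have hle : φ s ≤ φ t := hmono.monotoneOn hs ht hst
    have e : (∫ u in (φ s)..(φ t), φ u) + A2 t = A2 s :=
      integral_add_adjacent_intervals (hφint _ _ hs' ht') (hφint _ _ ht' h1m)
    have nn : 0 ≤ ∫ u in (φ s)..(φ t), φ u := by
      apply intervalIntegral.integral_nonneg hle
      intro u hu
      exact hφnn u ⟨hs'.1.trans hu.1, hu.2.trans ht'.2⟩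
    linarith
  have iA3 : IntervalIntegrable (fun t => φ t * ψ t) volume 0 1 := by
    apply MonotoneOn.intervalIntegrable
    rw [huIcc]
    intro s hs t ht hst
    exact mul_le_mul (hmono.monotoneOn hs ht hst) (hψmono.monotoneOn hs ht hst)
      (hψnn s hs) (hφnn t ht)
  have iA4 : IntervalIntegrable (fun t => ψ t * ψ (ψ t)) volume 0 1 := by
    apply MonotoneOn.intervalIntegrable
    rw [huIcc]
    intro s hs t ht hst
    exact mul_le_mul (hψmono.monotoneOn hs ht hst) (hψψmono.monotoneOn hs ht hst)
      (hψnn _ (hψmaps hs)) (hψnn t ht)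
  have iA5 : IntervalIntegrable (fun t => φ (φ t) * φ t) volume 0 1 := by
    apply MonotoneOn.intervalIntegrable
    rw [huIcc]
    intro s hs t ht hst
    exact mul_le_mul (hφφmono.monotoneOn hs ht hst) (hmono.monotoneOn hs ht hst)
      (hφnn s hs) (hφnn _ (hmaps ht))
  -- evaluate ∫ A4 = P1 + F1 - M - C
  have hA4 : (∫ t in (0:ℝ)..1, ψ t * ψ (ψ t)) = P1 + F1 - M - C := by
    rw [← K3]
    have congr1 : (∫ t in (0:ℝ)..1, ∫ u in (φ (φ t))..1, ψ u) =
        ∫ t in (0:ℝ)..1, (P1 + F1 - φ (φ t) * φ t - A2 t) := by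
      apply integral_congr
      rw [huIcc]
      intro t ht
      have hb : φ t ∈ Icc (0:ℝ) 1 := hmaps ht
      have hbb : φ (φ t) ∈ Icc (0:ℝ) 1 := hmaps hb
      have e1 : (∫ u in (0:ℝ)..(φ (φ t)), ψ u) + (∫ u in (φ (φ t))..1, ψ u) = P1 :=
        integral_add_adjacent_intervals (hψint _ _ h0m hbb) (hψint _ _ hbb h1m)
      have Yt := young_eq φ ψ hmono h0 hmaps hψmaps hinv1 hbb
      rw [(hinv (φ t) hb).1] at Yt
      have e2 : (∫ u in (0:ℝ)..(φ t), φ u) + A2 t = F1 :=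
        integral_add_adjacent_intervals (hφint _ _ h0m hb) (hφint _ _ hb h1m)
      dsimp only
      linarith
    rw [congr1]
    have e3 : (∫ t in (0:ℝ)..1, φ (φ t) * φ t) = M := by
      rw [hM]
      apply integral_congr
      intro t _
      exact mul_comm _ _
    have isub : IntervalIntegrable (fun t => P1 + F1 - φ (φ t) * φ t) volume 0 1 :=
      intervalIntegrable_const.sub iA5
    rw [integral_sub isub iA2, integral_sub intervalIntegrable_const iA5,
      intervalIntegral.integral_const, e3]
    have hA2C : (∫ x in (0:ℝ)..1, A2 x) = C := K1
    rw [hA2C]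
    norm_num
  -- main decomposition
  have main : (∫ t in (0:ℝ)..1, ∫ s in (ψ (ψ t))..(φ t), (φ s - ψ t)) =
      (∫ t in (0:ℝ)..1, A1 t) - (∫ t in (0:ℝ)..1, A2 t) - C +
        ∫ t in (0:ℝ)..1, ψ t * ψ (ψ t) := by
    rw [integral_congr (g := fun t => A1 t - A2 t - φ t * ψ t + ψ t * ψ (ψ t))
      (by rw [huIcc]; exact inner_eq)]
    rw [integral_add ((iA1.sub iA2).sub iA3) iA4, integral_sub (iA1.sub iA2) iA3,
      integral_sub iA1 iA2]
  have eA1 : (∫ t in (0:ℝ)..1, A1 t) = M := K2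
  have eA2 : (∫ t in (0:ℝ)..1, A2 t) = C := K1
  rw [main, eA1, eA2, hA4]
  have hY : P1 = 1 - F1 := Y1
  linarith
end

section
/- Let φ : [0,1] → [0,1] be a strictly increasing continuous function with φ(x) ≥ x for all x ∈ [0,1], and let V_φ be the operator on L²[0,1] given by (V_φ f)(x) = ∫₀^{φ(x)} f(t) dt. Then for every a ∈ (0,1), applying V_φ to the indicator function f_a = 1_{[a,1]} yields (V_φ f_a)(x) ≥ (φ(a) − a)·f_a(x) for all x ∈ [0,1]; consequently ‖V_φⁿ f_a‖ ≥ (φ(a)−a)ⁿ ‖f_a‖ for all n, so the spectral radius of V_φ is at least sup_{x∈[0,1]} (φ(x) − x). -/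
open Set MeasureTheory intervalIntegral

set_option synthInstance.maxHeartbeats 1000000
set_option maxHeartbeats 1000000

/-! ### Auxiliary integral computations -/

lemma ind_int (b c : ℝ) (hb : 0 ≤ b) (h : b ≤ c) :
    ∫ t in (0:ℝ)..c, Set.indicator (Ici b) (fun _ => (1:ℝ)) t = c - b := by
  rw [intervalIntegral.integral_of_le (hb.trans h),
    MeasureTheory.setIntegral_indicator measurableSet_Ici, setIntegral_const]
  have hm : volume (Ioc 0 c ∩ Ici b) = ENNReal.ofReal (c - b) := by
    apply le_antisymm
    · calc volume (Ioc 0 c ∩ Ici b) ≤ volume (Ioc b c ∪ {b}) := by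
            apply measure_mono
            rintro x ⟨⟨h1, h2⟩, h3⟩
            rcases lt_or_eq_of_le (mem_Ici.mp h3) with h4 | h4
            · exact Or.inl ⟨h4, h2⟩
            · exact Or.inr (by simp [h4.symm])
        _ ≤ volume (Ioc b c) + volume {b} := measure_union_le _ _
        _ = ENNReal.ofReal (c - b) := by simp [Real.volume_Ioc]
    · rw [← Real.volume_Ioc (a := b) (b := c)]
      apply measure_mono
      rintro x ⟨h1, h2⟩
      exact ⟨⟨hb.trans_lt h1, h2⟩, h1.le⟩
  rw [measureReal_def, hm, ENNReal.toReal_ofReal (by linarith)]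
  simp

lemma ind_int_nonneg (b c : ℝ) (hc : 0 ≤ c) :
    0 ≤ ∫ t in (0:ℝ)..c, Set.indicator (Ici b) (fun _ => (1:ℝ)) t := by
  apply intervalIntegral.integral_nonneg hc
  intro x _
  exact Set.indicator_nonneg (by intros; norm_num) x

lemma part1 (φ : ℝ → ℝ)
    (hmono : StrictMonoOn φ (Icc 0 1))
    (hge : ∀ x ∈ Icc (0:ℝ) 1, x ≤ φ x)
    (b : ℝ) (hb : b ∈ Icc (0:ℝ) 1) :
    ∀ x ∈ Icc (0:ℝ) 1,
      (φ b - b) * Set.indicator (Ici b) (fun _ => (1:ℝ)) x ≤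
        ∫ t in (0:ℝ)..(φ x), Set.indicator (Ici b) (fun _ => (1:ℝ)) t := by
  intro x hx
  by_cases hxb : b ≤ x
  · rw [Set.indicator_of_mem (mem_Ici.mpr hxb), mul_one]
    have hφbx : φ b ≤ φ x := hmono.monotoneOn hb hx hxb
    have hbφ : b ≤ φ b := hge b hb
    rw [ind_int b (φ x) hb.1 (hbφ.trans hφbx)]
    linarith
  · rw [Set.indicator_of_notMem (by simpa using hxb), mul_zero]
    exact ind_int_nonneg b (φ x) (hx.1.trans (hge x hx))

/-! ### Order facts on `Lp` -/

lemma lp_smul_nonneg (μ : Measure ℝ) (c : ℝ) (hc : 0 ≤ c) (z : Lp ℝ 2 μ) (hz : 0 ≤ z) :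
    0 ≤ c • z := by
  rw [← Lp.coeFn_nonneg]
  filter_upwards [Lp.coeFn_smul c z, (Lp.coeFn_nonneg z).mpr hz] with x h1 h2
  rw [h1]
  exact mul_nonneg hc h2

lemma lp_smul_le {μ : Measure ℝ} {c : ℝ} (hc : 0 ≤ c) {x y : Lp ℝ 2 μ} (hxy : x ≤ y) :
    c • x ≤ c • y := by
  have := lp_smul_nonneg μ c hc (y - x) (by simpa using hxy)
  rw [smul_sub] at this
  exact sub_nonneg.mp this

/-! ### The operator is positive and dominates `(φ b - b)` on indicators -/

section Op
variable {φ : ℝ → ℝ} {μ : Measure ℝ}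

lemma Vpos (hμ : μ = volume.restrict (Icc 0 1))
    (V : Lp ℝ 2 μ →L[ℝ] Lp ℝ 2 μ)
    (hV : ∀ f : Lp ℝ 2 μ, ∀ᵐ x ∂μ, (V f : ℝ → ℝ) x = ∫ t in (0:ℝ)..(φ x), (f : ℝ → ℝ) t)
    (hmaps : MapsTo φ (Icc 0 1) (Icc 0 1)) :
    ∀ f : Lp ℝ 2 μ, 0 ≤ f → 0 ≤ V f := by
  intro f hf
  rw [← Lp.coeFn_nonneg]
  have hf' : ∀ᵐ x ∂(volume.restrict (Icc (0:ℝ) 1)), 0 ≤ (f : ℝ → ℝ) x := by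
    rw [← hμ]; exact (Lp.coeFn_nonneg f).mpr hf
  filter_upwards [hV f, hμ ▸ ae_restrict_mem (μ := volume) measurableSet_Icc] with x h1 h2
  rw [h1]
  have hφx := hmaps h2
  apply intervalIntegral.integral_nonneg_of_ae_restrict (hφx.1)
  exact ae_restrict_of_ae_restrict_of_subset (Icc_subset_Icc le_rfl hφx.2) hf'

lemma cg_le_Vg (hμ : μ = volume.restrict (Icc 0 1))
    (hmono : StrictMonoOn φ (Icc 0 1))
    (hge : ∀ x ∈ Icc (0:ℝ) 1, x ≤ φ x)
    (hmaps : MapsTo φ (Icc 0 1) (Icc 0 1))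
    (V : Lp ℝ 2 μ →L[ℝ] Lp ℝ 2 μ)
    (hV : ∀ f : Lp ℝ 2 μ, ∀ᵐ x ∂μ, (V f : ℝ → ℝ) x = ∫ t in (0:ℝ)..(φ x), (f : ℝ → ℝ) t)
    (b : ℝ) (hb : b ∈ Icc (0:ℝ) 1) (g : Lp ℝ 2 μ)
    (hg : ∀ᵐ x ∂μ, (g : ℝ → ℝ) x = Set.indicator (Ici b) (fun _ => (1:ℝ)) x) :
    (φ b - b) • g ≤ V g := by
  rw [← Lp.coeFn_le]
  have hg2 : ∀ᵐ t ∂(volume : Measure ℝ), t ∈ Icc (0:ℝ) 1 →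
      (g : ℝ → ℝ) t = Set.indicator (Ici b) (fun _ => (1:ℝ)) t :=
    (ae_restrict_iff' measurableSet_Icc).mp (hμ ▸ hg)
  filter_upwards [hV g, hg, Lp.coeFn_smul (φ b - b) g,
    hμ ▸ ae_restrict_mem (μ := volume) measurableSet_Icc] with x h1 h2 h3 h4
  rw [h3, h1]
  have hφx := hmaps h4
  have hcong : (∫ t in (0:ℝ)..(φ x), (g : ℝ → ℝ) t) =
      ∫ t in (0:ℝ)..(φ x), Set.indicator (Ici b) (fun _ => (1:ℝ)) t := by
    apply intervalIntegral.integral_congr_ae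
    filter_upwards [hg2] with t ht hmem
    rw [uIoc_of_le hφx.1] at hmem
    exact ht ⟨hmem.1.le, hmem.2.trans hφx.2⟩
  rw [hcong]
  have := part1 φ hmono hge b hb x h4
  simpa [h2] using this

end Op

/-! ### Powers of a positive operator -/

section Ind
variable {μ : Measure ℝ} (V : Lp ℝ 2 μ →L[ℝ] Lp ℝ 2 μ)

lemma Vmono (hpos : ∀ f : Lp ℝ 2 μ, 0 ≤ f → 0 ≤ V f)
    {f h : Lp ℝ 2 μ} (hfh : f ≤ h) : V f ≤ V h := by
  have := hpos (h - f) (by simpa using hfh)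
  rw [map_sub] at this
  exact sub_nonneg.mp this

lemma pow_ineq (hpos : ∀ f : Lp ℝ 2 μ, 0 ≤ f → 0 ≤ V f)
    {c : ℝ} (hc : 0 ≤ c) {g : Lp ℝ 2 μ} (hgpos : 0 ≤ g) (hcg : c • g ≤ V g) :
    ∀ n : ℕ, c ^ n • g ≤ (V ^ n) g := by
  intro n
  induction n with
  | zero => simp
  | succ n ih =>
    have h1 : (V ^ (n+1)) g = V ((V ^ n) g) := by
      rw [pow_succ']; rfl
    rw [h1, pow_succ, mul_comm, ← smul_smul]
    calc (c • c ^ n • g) ≤ c ^ n • V g := by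
          rw [smul_comm]
          have h2 : 0 ≤ c ^ n • (V g - c • g) :=
            lp_smul_nonneg μ _ (pow_nonneg hc n) _ (by simpa using hcg)
          rw [smul_sub] at h2
          exact sub_nonneg.mp h2
      _ = V (c ^ n • g) := by rw [_root_.map_smul]
      _ ≤ V ((V ^ n) g) := Vmono V hpos ih

lemma norm_ineq (hpos : ∀ f : Lp ℝ 2 μ, 0 ≤ f → 0 ≤ V f)
    {c : ℝ} (hc : 0 ≤ c) {g : Lp ℝ 2 μ} (hgpos : 0 ≤ g) (hcg : c • g ≤ V g) :
    ∀ n : ℕ, c ^ n * ‖g‖ ≤ ‖(V ^ n) g‖ := by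
  intro n
  have h1 : c ^ n • g ≤ (V ^ n) g := pow_ineq V hpos hc hgpos hcg n
  have h2 : (0:Lp ℝ 2 μ) ≤ c ^ n • g := lp_smul_nonneg μ _ (pow_nonneg hc n) _ hgpos
  have h3 : ‖c ^ n • g‖ ≤ ‖(V ^ n) g‖ := by
    apply norm_le_norm_of_abs_le_abs
    rw [abs_of_nonneg h2, abs_of_nonneg (h2.trans h1)]
    exact h1
  rwa [norm_smul, Real.norm_eq_abs, abs_of_nonneg (pow_nonneg hc n)] at h3

end Ind

/-! ### Positivity of the resolvent via Neumann series and a walking argument -/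

section Neumann
variable {μ : Measure ℝ}

local notation "A" => Lp ℝ 2 μ →L[ℝ] Lp ℝ 2 μ

def Pos (T : Lp ℝ 2 μ →L[ℝ] Lp ℝ 2 μ) : Prop := ∀ f, 0 ≤ f → 0 ≤ T f

lemma Pos_mul {S T : Lp ℝ 2 μ →L[ℝ] Lp ℝ 2 μ} (hS : Pos S) (hT : Pos T) : Pos (S * T) :=
  fun f hf => hS _ (hT f hf)

lemma Pos_pow {T : Lp ℝ 2 μ →L[ℝ] Lp ℝ 2 μ} (hT : Pos T) (n : ℕ) : Pos (T ^ n) := by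
  induction n with
  | zero => intro f hf; simpa using hf
  | succ n ih => rw [pow_succ]; exact Pos_mul ih hT

lemma neumann (u : (Lp ℝ 2 μ →L[ℝ] Lp ℝ 2 μ)ˣ) (w : Lp ℝ 2 μ →L[ℝ] Lp ℝ 2 μ)
    (hx : ‖(↑u⁻¹ : A) * w‖ < 1)
    (hu : Pos (↑u⁻¹ : A)) (hw : Pos w) :
    IsUnit ((↑u : A) - w) ∧ Pos (Ring.inverse ((↑u : A) - w)) := by
  set x : A := (↑u⁻¹ : A) * w with hxdef
  have hunit : (↑u : A) - w = ↑(u * Units.oneSub x hx) := by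
    rw [Units.val_mul, Units.val_oneSub, mul_sub, mul_one, ← mul_assoc, Units.mul_inv, one_mul]
  have h2 : Ring.inverse ((↑u : A) - w) = (∑' n : ℕ, x ^ n) * (↑u⁻¹ : A) := by
    rw [hunit, Ring.inverse_unit, mul_inv_rev, Units.val_mul]
    congr 1
  refine ⟨hunit ▸ (u * Units.oneSub x hx).isUnit, ?_⟩
  intro f hf
  rw [h2, ContinuousLinearMap.mul_apply]
  set g' := (↑u⁻¹ : A) f with hg'
  have hsum : Summable (fun n : ℕ => x ^ n) := summable_geometric_of_norm_lt_one hx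
  have happ : (∑' n : ℕ, x ^ n) g' = ∑' n : ℕ, (x ^ n) g' := by
    have h3 := hsum.hasSum.mapL (ContinuousLinearMap.apply ℝ (Lp ℝ 2 μ) g')
    simpa using h3.tsum_eq.symm
  rw [happ]
  apply tsum_nonneg
  intro n
  exact Pos_pow (Pos_mul hu hw) n _ (hu f hf)

end Neumann

section Walk
variable {μ : Measure ℝ}

noncomputable def Ri (V : Lp ℝ 2 μ →L[ℝ] Lp ℝ 2 μ) (t : ℝ) : Lp ℝ 2 μ →L[ℝ] Lp ℝ 2 μ :=
  Ring.inverse (algebraMap ℝ (Lp ℝ 2 μ →L[ℝ] Lp ℝ 2 μ) t - V)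

lemma pos_algebraMap_smul (c : ℝ) (hc : 0 ≤ c) :
    Pos (algebraMap ℝ (Lp ℝ 2 μ →L[ℝ] Lp ℝ 2 μ) c) := by
  intro f hf
  rw [Algebra.algebraMap_eq_smul_one, ContinuousLinearMap.smul_apply,
    ContinuousLinearMap.one_apply]
  exact lp_smul_nonneg μ c hc f hf

lemma Ri_top (V : Lp ℝ 2 μ →L[ℝ] Lp ℝ 2 μ) (hVpos : Pos V) (t : ℝ) (ht : ‖V‖ < t) :
    Pos (Ri V t) := by
  have ht0 : (0:ℝ) < t := (norm_nonneg V).trans_lt ht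
  set u : (Lp ℝ 2 μ →L[ℝ] Lp ℝ 2 μ)ˣ :=
    (Units.map (algebraMap ℝ (Lp ℝ 2 μ →L[ℝ] Lp ℝ 2 μ)).toMonoidHom) (Units.mk0 t ht0.ne')
    with hu
  have hval : (↑u : Lp ℝ 2 μ →L[ℝ] Lp ℝ 2 μ) = algebraMap ℝ _ t := rfl
  have hvalinv : (↑u⁻¹ : Lp ℝ 2 μ →L[ℝ] Lp ℝ 2 μ) = algebraMap ℝ _ t⁻¹ := rfl
  have hnorm : ‖(↑u⁻¹ : Lp ℝ 2 μ →L[ℝ] Lp ℝ 2 μ) * V‖ < 1 := by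
    rw [hvalinv, Algebra.algebraMap_eq_smul_one, smul_mul_assoc, one_mul, norm_smul,
      Real.norm_eq_abs, abs_of_nonneg (inv_nonneg.mpr ht0.le)]
    rw [inv_mul_lt_iff₀ ht0, mul_one]
    exact ht
  have h := neumann u V hnorm (hvalinv ▸ pos_algebraMap_smul t⁻¹ (inv_nonneg.mpr ht0.le)) hVpos
  rw [Ri, ← hval]
  exact h.2

end Walk

section Walk2
variable {μ : Measure ℝ}

lemma Ri_pos_of_gt (V : Lp ℝ 2 μ →L[ℝ] Lp ℝ 2 μ) (hVpos : Pos V) (r₀ : ℝ)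
    (hr : ∀ t, r₀ < t → IsUnit (algebraMap ℝ (Lp ℝ 2 μ →L[ℝ] Lp ℝ 2 μ) t - V)) :
    ∀ t, r₀ < t → Pos (Ri V t) := by
  intro t₁ ht₁
  set M := max t₁ (‖V‖ + 1) with hM
  have ht₁M : t₁ ≤ M := le_max_left _ _
  have hVM : ‖V‖ + 1 ≤ M := le_max_right _ _
  have hF : Continuous (fun s : ℝ => algebraMap ℝ (Lp ℝ 2 μ →L[ℝ] Lp ℝ 2 μ) s - V) := by
    have : (fun s : ℝ => algebraMap ℝ (Lp ℝ 2 μ →L[ℝ] Lp ℝ 2 μ) s - V) =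
        fun s : ℝ => s • (1 : Lp ℝ 2 μ →L[ℝ] Lp ℝ 2 μ) - V := by
      funext s; rw [Algebra.algebraMap_eq_smul_one]
    rw [this]
    exact (continuous_id.smul continuous_const).sub continuous_const
  have hco : ContinuousOn (fun s => Ri V s) (Icc t₁ M) := by
    intro t ht
    have hunit := hr t (ht₁.trans_le ht.1)
    have h1 : ContinuousAt Ring.inverse
        (algebraMap ℝ (Lp ℝ 2 μ →L[ℝ] Lp ℝ 2 μ) t - V) := by
      rw [← hunit.unit_spec]
      exact NormedRing.inverse_continuousAt _
    exact (ContinuousAt.comp (g := Ring.inverse)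
      (f := fun s : ℝ => algebraMap ℝ (Lp ℝ 2 μ →L[ℝ] Lp ℝ 2 μ) s - V) h1
      hF.continuousAt).continuousWithinAt
  obtain ⟨C, hC⟩ := isCompact_Icc.exists_bound_of_continuousOn hco
  set C' := max C 1 with hC'def
  have hC'1 : (1:ℝ) ≤ C' := le_max_right _ _
  have hC'0 : (0:ℝ) < C' := lt_of_lt_of_le one_pos hC'1
  have hC' : ∀ x ∈ Icc t₁ M, ‖Ri V x‖ ≤ C' := fun x hx => (hC x hx).trans (le_max_left _ _)
  set δ := 1 / (2 * C') with hδdef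
  have hδ0 : 0 < δ := by positivity
  have claim : ∀ k : ℕ, ∀ t, t₁ ≤ t → M ≤ t + k * δ → Pos (Ri V t) := by
    intro k
    induction k with
    | zero =>
      intro t htt hMt
      simp only [Nat.cast_zero, zero_mul, add_zero] at hMt
      exact Ri_top V hVpos t (by linarith)
    | succ k ih =>
      intro t htt hMt
      by_cases hMt' : M ≤ t
      · exact Ri_top V hVpos t (by linarith)
      push_neg at hMt'
      set t' := min (t + δ) M with ht'def
      have htt' : t ≤ t' := le_min (by linarith) hMt'.le
      have ht'M : t' ≤ M := min_le_right _ _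
      have ht₁t' : t₁ ≤ t' := htt.trans htt'
      have ht'δ : t' - t ≤ δ := by
        have : t' ≤ t + δ := min_le_left _ _
        linarith
      have h2 : M ≤ t' + k * δ := by
        rcases min_cases (t + δ) M with ⟨h3, _⟩ | ⟨h3, _⟩
        · rw [ht'def, h3]
          push_cast at hMt
          have : (0:ℝ) ≤ k * δ := by positivity
          nlinarith [hMt]
        · rw [ht'def, h3]
          have : (0:ℝ) ≤ k * δ := by positivity
          linarith
      have hPos' := ih t' ht₁t' h2
      have hunit' := hr t' (ht₁.trans_le ht₁t')
      have huv : (hunit'.unit : Lp ℝ 2 μ →L[ℝ] Lp ℝ 2 μ) =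
          algebraMap ℝ _ t' - V := hunit'.unit_spec
      have huinv : ((hunit'.unit⁻¹ : _ˣ) : Lp ℝ 2 μ →L[ℝ] Lp ℝ 2 μ) = Ri V t' := by
        rw [Ri]
        conv_rhs => rw [← huv]
        rw [Ring.inverse_unit]
      have hnormu : ‖((hunit'.unit⁻¹ : _ˣ) : Lp ℝ 2 μ →L[ℝ] Lp ℝ 2 μ)‖ ≤ C' := by
        rw [huinv]
        exact hC' t' ⟨ht₁t', ht'M⟩
      have hwpos : Pos (algebraMap ℝ (Lp ℝ 2 μ →L[ℝ] Lp ℝ 2 μ) (t' - t)) :=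
        pos_algebraMap_smul _ (by linarith)
      have hwnorm : ‖algebraMap ℝ (Lp ℝ 2 μ →L[ℝ] Lp ℝ 2 μ) (t' - t)‖ ≤ δ := by
        rw [Algebra.algebraMap_eq_smul_one, norm_smul, Real.norm_eq_abs,
          abs_of_nonneg (by linarith)]
        calc (t' - t) * ‖(1 : Lp ℝ 2 μ →L[ℝ] Lp ℝ 2 μ)‖ ≤ δ * 1 := by
              apply mul_le_mul ht'δ _ (norm_nonneg _) hδ0.le
              rw [ContinuousLinearMap.one_def]
              exact ContinuousLinearMap.norm_id_le
          _ = δ := mul_one δ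
      have hxnorm : ‖((hunit'.unit⁻¹ : _ˣ) : Lp ℝ 2 μ →L[ℝ] Lp ℝ 2 μ) *
          algebraMap ℝ (Lp ℝ 2 μ →L[ℝ] Lp ℝ 2 μ) (t' - t)‖ < 1 := by
        calc ‖_ * _‖ ≤ _ * _ := norm_mul_le _ _
          _ ≤ C' * δ := mul_le_mul hnormu hwnorm (norm_nonneg _) hC'0.le
          _ = 1/2 := by rw [hδdef]; field_simp
          _ < 1 := by norm_num
      have h := neumann hunit'.unit _ hxnorm (huinv ▸ hPos') hwpos
      have heq : (hunit'.unit : Lp ℝ 2 μ →L[ℝ] Lp ℝ 2 μ) -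
          algebraMap ℝ (Lp ℝ 2 μ →L[ℝ] Lp ℝ 2 μ) (t' - t) =
          algebraMap ℝ (Lp ℝ 2 μ →L[ℝ] Lp ℝ 2 μ) t - V := by
        rw [huv, sub_right_comm, ← map_sub]
        have harg : t' - (t' - t) = t := by ring
        rw [harg]
      rw [Ri, ← heq]
      exact h.2
  obtain ⟨k, hk⟩ := exists_nat_ge ((M - t₁) / δ)
  refine claim k t₁ le_rfl ?_
  have : M - t₁ ≤ k * δ := by
    rw [div_le_iff₀ hδ0] at hk
    linarith
  linarith

end Walk2

/-! ### The contradiction from a positive resolvent below `c` -/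

section Final
variable {μ : Measure ℝ}

lemma Vmono' (V : Lp ℝ 2 μ →L[ℝ] Lp ℝ 2 μ) (hpos : Pos V)
    {f h : Lp ℝ 2 μ} (hfh : f ≤ h) : V f ≤ V h := by
  have := hpos (h - f) (by simpa using hfh)
  rw [map_sub] at this
  exact sub_nonneg.mp this

lemma final_contra (V : Lp ℝ 2 μ →L[ℝ] Lp ℝ 2 μ) (t c : ℝ) (ht0 : 0 < t) (htc : t < c)
    (hunit : IsUnit (algebraMap ℝ (Lp ℝ 2 μ →L[ℝ] Lp ℝ 2 μ) t - V))
    (hRpos : Pos (Ri V t)) (hVpos : Pos V)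
    (g : Lp ℝ 2 μ) (hg0 : 0 ≤ g) (hgn : 0 < ‖g‖) (hcg : c • g ≤ V g) : False := by
  have hc0 : (0:ℝ) < c := ht0.trans htc
  set G := Ri V t g with hGdef
  have hGg : t • G = g + V G := by
    have h1 : ((algebraMap ℝ (Lp ℝ 2 μ →L[ℝ] Lp ℝ 2 μ) t - V) * Ri V t) g = g := by
      rw [Ri, Ring.mul_inverse_cancel _ hunit]
      exact ContinuousLinearMap.one_apply g
    rw [ContinuousLinearMap.mul_apply, ContinuousLinearMap.sub_apply,
      Algebra.algebraMap_eq_smul_one, ContinuousLinearMap.smul_apply,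
      ContinuousLinearMap.one_apply] at h1
    exact (sub_eq_iff_eq_add.mp h1)
  have hGpos : 0 ≤ G := hRpos g hg0
  have claim : ∀ n : ℕ, ((1/t) * (c/t)^n) • g ≤ G := by
    intro n
    induction n with
    | zero =>
      simp only [pow_zero, mul_one]
      have h2 : g ≤ t • G := by
        rw [hGg]
        exact le_add_of_nonneg_right (hVpos G hGpos)
      have h3 := lp_smul_le (by positivity : (0:ℝ) ≤ 1/t) h2
      rw [smul_smul, one_div, inv_mul_cancel₀ ht0.ne', one_smul] at h3
      rw [one_div]
      exact h3
    | succ n ih =>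
      have hlam : (0:ℝ) ≤ (1/t) * (c/t)^n := by positivity
      have h2 : ((1/t) * (c/t)^n * c) • g ≤ V G := by
        calc ((1/t) * (c/t)^n * c) • g = ((1/t) * (c/t)^n) • (c • g) := by
              rw [smul_smul]
          _ ≤ ((1/t) * (c/t)^n) • V g := lp_smul_le hlam hcg
          _ = V (((1/t) * (c/t)^n) • g) := by rw [_root_.map_smul]
          _ ≤ V G := Vmono' V hVpos ih
      have h3 : ((1/t) * (c/t)^n * c) • g ≤ t • G := by
        rw [hGg]
        exact h2.trans (le_add_of_nonneg_left hg0)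
      have h4 := lp_smul_le (by positivity : (0:ℝ) ≤ 1/t) h3
      rw [smul_smul, smul_smul, one_div, inv_mul_cancel₀ ht0.ne', one_smul] at h4
      have harg : t⁻¹ * (t⁻¹ * (c/t)^n * c) = (1/t) * (c/t)^(n+1) := by
        ring
      rwa [harg] at h4
  have hnrm : ∀ n : ℕ, (1/t) * (c/t)^n * ‖g‖ ≤ ‖G‖ := by
    intro n
    have hlam : (0:ℝ) ≤ (1/t) * (c/t)^n := by positivity
    have h2 : (0:Lp ℝ 2 μ) ≤ ((1/t) * (c/t)^n) • g := lp_smul_nonneg μ _ hlam g hg0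
    have h3 : ‖((1/t) * (c/t)^n) • g‖ ≤ ‖G‖ := by
      apply norm_le_norm_of_abs_le_abs
      rw [abs_of_nonneg h2, abs_of_nonneg (h2.trans (claim n))]
      exact claim n
    rwa [norm_smul, Real.norm_eq_abs, abs_of_nonneg hlam] at h3
  obtain ⟨n, hn⟩ := pow_unbounded_of_one_lt (t * ‖G‖ / ‖g‖) ((one_lt_div ht0).mpr htc)
  have h4 : t * ‖G‖ < (c/t)^n * ‖g‖ := by
    rw [div_lt_iff₀ hgn] at hn
    linarith
  have h5 : ‖G‖ < 1/t * (c/t)^n * ‖g‖ := by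
    rw [show (1:ℝ)/t * (c/t)^n * ‖g‖ = ((c/t)^n * ‖g‖)/t by ring, lt_div_iff₀ ht0]
    linarith
  linarith [hnrm n]

lemma g_norm_pos (b : ℝ) (hb0 : 0 ≤ b) (hb1 : b < 1)
    (g : Lp ℝ 2 (volume.restrict (Icc (0:ℝ) 1)))
    (hg : ∀ᵐ x ∂(volume.restrict (Icc (0:ℝ) 1)),
      (g : ℝ → ℝ) x = Set.indicator (Ici b) (fun _ => (1:ℝ)) x) : 0 < ‖g‖ := by
  rw [norm_pos_iff]
  intro h0
  have h1 : ∀ᵐ x ∂(volume.restrict (Icc (0:ℝ) 1)),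
      Set.indicator (Ici b) (fun _ => (1:ℝ)) x = 0 := by
    filter_upwards [hg, Lp.coeFn_zero (E := ℝ) (p := 2) (μ := volume.restrict (Icc (0:ℝ) 1))]
      with x hx1 hx2
    rw [h0] at hx1
    rw [← hx1]
    exact hx2
  rw [ae_iff] at h1
  have h2 : Ioc b 1 ⊆ {x | ¬ Set.indicator (Ici b) (fun _ => (1:ℝ)) x = 0} := by
    intro x hx
    simp only [mem_setOf_eq, Set.indicator_of_mem (mem_Ici.mpr hx.1.le)]
    norm_num
  have h3 : (volume.restrict (Icc (0:ℝ) 1)) (Ioc b 1) = 0 :=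
    le_antisymm (h1 ▸ measure_mono h2) (zero_le)
  rw [Measure.restrict_apply measurableSet_Ioc] at h3
  have h4 : (Ioc b 1 ∩ Icc (0:ℝ) 1 : Set ℝ) = Ioc b 1 := by
    apply inter_eq_left.mpr
    intro x hx
    exact ⟨hb0.trans hx.1.le, hx.2⟩
  rw [h4, Real.volume_Ioc] at h3
  have : (0:ℝ) < 1 - b := by linarith
  simp [ENNReal.ofReal_eq_zero] at h3
  linarith

end Final

/-! ### Main theorem -/

theorem stmt_17 (φ : ℝ → ℝ)
    (hmono : StrictMonoOn φ (Icc 0 1))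
    (hcont : ContinuousOn φ (Icc 0 1))
    (hmaps : MapsTo φ (Icc 0 1) (Icc 0 1))
    (hge : ∀ x ∈ Icc (0:ℝ) 1, x ≤ φ x)
    (μ : Measure ℝ) (hμ : μ = volume.restrict (Icc 0 1))
    (V : Lp ℝ 2 μ →L[ℝ] Lp ℝ 2 μ)
    (hV : ∀ f : Lp ℝ 2 μ, ∀ᵐ x ∂μ, (V f : ℝ → ℝ) x = ∫ t in (0:ℝ)..(φ x), (f : ℝ → ℝ) t)
    (a : ℝ) (ha : a ∈ Ioo (0:ℝ) 1)
    (fa : Lp ℝ 2 μ)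
    (hfa : ∀ᵐ x ∂μ, (fa : ℝ → ℝ) x = Set.indicator (Ici a) (fun _ => (1:ℝ)) x) :
    (∀ x ∈ Icc (0:ℝ) 1,
        (φ a - a) * Set.indicator (Ici a) (fun _ => (1:ℝ)) x ≤
          ∫ t in (0:ℝ)..(φ x), Set.indicator (Ici a) (fun _ => (1:ℝ)) t) ∧
    (∀ n : ℕ, (φ a - a) ^ n * ‖fa‖ ≤ ‖(V ^ n) fa‖) ∧
    ENNReal.ofReal (⨆ x ∈ Icc (0:ℝ) 1, (φ x - x)) ≤ spectralRadius ℝ V := by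
  have haI : a ∈ Icc (0:ℝ) 1 := ⟨ha.1.le, ha.2.le⟩
  have hVpos : ∀ f : Lp ℝ 2 μ, 0 ≤ f → 0 ≤ V f := Vpos hμ V hV hmaps
  have hfa0 : 0 ≤ fa := by
    rw [← Lp.coeFn_nonneg]
    filter_upwards [hfa] with x hx
    rw [hx]
    exact Set.indicator_nonneg (by intros; norm_num) x
  have hca : (0:ℝ) ≤ φ a - a := sub_nonneg.mpr (hge a haI)
  have hcga : (φ a - a) • fa ≤ V fa := cg_le_Vg hμ hmono hge hmaps V hV a haI fa hfa
  refine ⟨part1 φ hmono hge a haI, fun n => norm_ineq V hVpos hca hfa0 hcga n, ?_⟩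
  by_contra hcon
  have hlt : spectralRadius ℝ V < ENNReal.ofReal (⨆ x ∈ Icc (0:ℝ) 1, (φ x - x)) :=
    not_le.mp hcon
  have hfin : spectralRadius ℝ V ≠ ⊤ := ne_top_of_lt hlt
  set r₀ := (spectralRadius ℝ V).toReal with hr₀def
  have hr₀0 : 0 ≤ r₀ := ENNReal.toReal_nonneg
  have hr₀S : r₀ < ⨆ x ∈ Icc (0:ℝ) 1, (φ x - x) :=
    (ENNReal.lt_ofReal_iff_toReal_lt hfin).mp hlt
  obtain ⟨b, hb⟩ := exists_lt_of_lt_ciSup hr₀S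
  by_cases hbmem : b ∈ Icc (0:ℝ) 1
  swap
  · have : IsEmpty (b ∈ Icc (0:ℝ) 1) := ⟨fun h => hbmem h⟩
    rw [Real.iSup_of_isEmpty] at hb
    linarith
  rw [ciSup_pos hbmem] at hb
  -- hb : r₀ < φ b - b
  have hb1 : b < 1 := by
    rcases lt_or_eq_of_le hbmem.2 with h | h
    · exact h
    · exfalso
      have h5 := (hmaps hbmem).2
      rw [h] at hb h5
      linarith
  -- the indicator of [b, ∞) as an element of L²
  have hmem : MemLp (Set.indicator (Ici b) (fun _ => (1:ℝ))) 2 μ := by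
    rw [hμ]
    exact (memLp_const (1:ℝ)).indicator measurableSet_Ici
  set g : Lp ℝ 2 μ := hmem.toLp _ with hgdef
  have hgcoe : ∀ᵐ x ∂μ, (g : ℝ → ℝ) x = Set.indicator (Ici b) (fun _ => (1:ℝ)) x :=
    hmem.coeFn_toLp
  have hg0 : 0 ≤ g := by
    rw [← Lp.coeFn_nonneg]
    filter_upwards [hgcoe] with x hx
    rw [hx]
    exact Set.indicator_nonneg (by intros; norm_num) x
  have hgn : 0 < ‖g‖ := by
    subst hμ
    exact g_norm_pos b hbmem.1 hb1 g hgcoe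
  have hcgb : (φ b - b) • g ≤ V g := cg_le_Vg hμ hmono hge hmaps V hV b hbmem g hgcoe
  have hr : ∀ t, r₀ < t → IsUnit (algebraMap ℝ (Lp ℝ 2 μ →L[ℝ] Lp ℝ 2 μ) t - V) := by
    intro t ht
    have ht0 : 0 < t := lt_of_le_of_lt hr₀0 ht
    have hlt' : spectralRadius ℝ V < (‖t‖₊ : ENNReal) := by
      rw [← ENNReal.ofReal_toReal hfin]
      calc ENNReal.ofReal r₀ < ENNReal.ofReal t :=
            (ENNReal.ofReal_lt_ofReal_iff ht0).mpr ht
        _ = (‖t‖₊ : ENNReal) := by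
            rw [← Real.toNNReal_eq_nnnorm_of_nonneg ht0.le]; rfl
    exact spectrum.mem_resolventSet_iff.mp
      (spectrum.mem_resolventSet_of_spectralRadius_lt hlt')
  set t := (r₀ + (φ b - b)) / 2 with htdef
  have htr₀ : r₀ < t := by rw [htdef]; linarith
  have htc : t < φ b - b := by rw [htdef]; linarith
  have ht0 : 0 < t := lt_of_le_of_lt hr₀0 htr₀
  have hRpos : Pos (Ri V t) := Ri_pos_of_gt V hVpos r₀ hr t htr₀
  exact final_contra V t (φ b - b) ht0 htc (hr t htr₀) hRpos hVpos g hg0 hgn hcgb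
end
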